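/- arXiv:0804.2115 — 3 statements merged into one kernel-verified Lean document; each statement's English description precedes it below -/
import Mathlib

section
/- If S₁ is a Gröbner–Shirshov basis in k⟨X⟩ and S₂ is a Gröbner–Shirshov basis in k⟨Y⟩ (each with respect to deg-lex orders), then S₁ ∪ S₂ is a Gröbner–Shirshov basis in k⟨X⟩ ⊗ k⟨Y⟩ with respect to the induced deg-lex order on X*Y*. -/
/-- A monomial order: a well-founded strict total order compatible with multiplication. -/
def MonOrd {M : Type*} [Monoid M] (lt : M → M → Prop) : Prop :=
  IsStrictTotalOrder M lt ∧ WellFounded lt ∧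
    ∀ u v w₁ w₂ : M, lt u v → lt (w₁ * u * w₂) (w₁ * v * w₂)

/-- `m` is the leading word of `f` with respect to the order `lt`. -/
def IsLeadR {k M : Type*} [Semiring k] (lt : M → M → Prop)
    (f : MonoidAlgebra k M) (m : M) : Prop :=
  m ∈ f.coeff.support ∧ ∀ u ∈ f.coeff.support, u ≠ m → lt u m

/-- `f` is monic: its leading coefficient is `1`. -/
def MonicR {k M : Type*} [Semiring k] (lt : M → M → Prop) (f : MonoidAlgebra k M) : Prop :=
  ∃ m, IsLeadR lt f m ∧ f.coeff m = 1

/-- The monomial `m` viewed as an element of the monoid algebra. -/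
noncomputable def mono (k : Type*) {M : Type*} [Semiring k] [Monoid M] (m : M) :
    MonoidAlgebra k M := MonoidAlgebra.of k M m

/-- `h` is trivial modulo `(S, w)`: it is a linear combination `Σ αᵢ aᵢ sᵢ bᵢ`
with `sᵢ ∈ S` and leading words `aᵢ s̄ᵢ bᵢ < w`. -/
def TrivModR {k M : Type*} [Semiring k] [Monoid M] (lt : M → M → Prop)
    (S : Set (MonoidAlgebra k M)) (w : M) (h : MonoidAlgebra k M) : Prop :=
  ∃ (n : ℕ) (α : Fin n → k) (a b : Fin n → M) (s : Fin n → MonoidAlgebra k M),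
    (∀ i, s i ∈ S) ∧
    h = ∑ i, α i • (mono k (a i) * s i * mono k (b i)) ∧
    ∀ i, ∃ m, IsLeadR lt (s i) m ∧ lt (a i * m * b i) w

/-- Gröbner–Shirshov basis in a free associative algebra `k⟨Z⟩`:
all intersection and inclusion compositions are trivial. -/
def FIsGSB {k Z : Type*} [Ring k] (lt : FreeMonoid Z → FreeMonoid Z → Prop)
    (S : Set (MonoidAlgebra k (FreeMonoid Z))) : Prop :=
  (∀ s ∈ S, MonicR lt s) ∧
  ∀ f ∈ S, ∀ g ∈ S, ∀ mf mg : FreeMonoid Z, IsLeadR lt f mf → IsLeadR lt g mg →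
    ((∀ a b : FreeMonoid Z, mf * b = a * mg →
        (mf * b).length < mf.length + mg.length →
        TrivModR lt S (mf * b) (f * mono k b - mono k a * g)) ∧
     (∀ a b : FreeMonoid Z, mf = a * mg * b →
        TrivModR lt S mf (f - mono k a * g * mono k b)))

/-- the deg-lex order on words induced by an order on letters -/
def degLex {A : Type*} (ltA : A → A → Prop) (u v : FreeMonoid A) : Prop :=
  u.length < v.length ∨ (u.length = v.length ∧ List.Lex ltA u.toList v.toList)

/-- Normal words of `k⟨X⟩ ⊗ k⟨Y⟩`: the monoid `X* × Y*`
(whose multiplication is `(u^X u^Y)(v^X v^Y) = u^X v^X u^Y v^Y`). -/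
abbrev NW (X Y : Type*) := FreeMonoid X × FreeMonoid Y

/-- the (deg-)lex order on `N = X*Y*` built from orders on `X*` and `Y*`:
`u > v` iff `u^X > v^X` or (`u^X = v^X` and `u^Y > v^Y`). -/
def lexNW {X Y : Type*} (ltX : FreeMonoid X → FreeMonoid X → Prop)
    (ltY : FreeMonoid Y → FreeMonoid Y → Prop) (u v : NW X Y) : Prop :=
  ltX u.1 v.1 ∨ (u.1 = v.1 ∧ ltY u.2 v.2)

/-- All compositions `(f,g)_w = p` in `k⟨X⟩ ⊗ k⟨Y⟩`, where `mf, mg` are the leading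
words of `f, g`.  The cases are: 1.1 `X`-inclusion only, 1.2 `Y`-inclusion only,
1.3 `X,Y`-inclusion, 1.4 `X,Y`-skew-inclusion, 2.1 `X`-intersection only,
2.2 `Y`-intersection only, 2.3 `X,Y`-intersection, 2.4 `X,Y`-skew-intersection,
3.1 `X`-inclusion and `Y`-intersection, 3.2 `X`-intersection and `Y`-inclusion. -/
def IsComp {k X Y : Type*} [Ring k] (f g : MonoidAlgebra k (NW X Y))
    (mf mg : NW X Y) (p : MonoidAlgebra k (NW X Y)) (w : NW X Y) : Prop :=
  let e : NW X Y → MonoidAlgebra k (NW X Y) := fun m => mono k m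
  let fx := mf.1; let fy := mf.2; let gx := mg.1; let gy := mg.2
  -- 1.1 X-inclusion only
  (∃ (a b : FreeMonoid X) (c : FreeMonoid Y), fx = a * gx * b ∧
     ((w = (fx, fy * c * gy) ∧ p = f * e (1, c * gy) - e (a, fy * c) * g * e (b, 1)) ∨
      (w = (fx, gy * c * fy) ∧ p = e (1, gy * c) * f - e (a, 1) * g * e (b, c * fy)))) ∨
  -- 1.2 Y-inclusion only
  (∃ (a : FreeMonoid X) (c d : FreeMonoid Y), fy = c * gy * d ∧
     ((w = (fx * a * gx, fy) ∧ p = f * e (a * gx, 1) - e (fx * a, c) * g * e (1, d)) ∨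
      (w = (gx * a * fx, fy) ∧ p = e (gx * a, 1) * f - e (1, c) * g * e (a * fx, d)))) ∨
  -- 1.3 X,Y-inclusion
  (∃ (a b : FreeMonoid X) (c d : FreeMonoid Y), fx = a * gx * b ∧ fy = c * gy * d ∧
     w = (fx, fy) ∧ p = f - e (a, c) * g * e (b, d)) ∨
  -- 1.4 X,Y-skew-inclusion
  (∃ (a b : FreeMonoid X) (c d : FreeMonoid Y), fx = a * gx * b ∧ gy = c * fy * d ∧
     w = (fx, gy) ∧ p = e (1, c) * f * e (1, d) - e (a, 1) * g * e (b, 1)) ∨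
  -- 2.1 X-intersection only
  (∃ (a b : FreeMonoid X) (c : FreeMonoid Y), fx * a = b * gx ∧
     (fx * a).length < fx.length + gx.length ∧
     ((w = (fx * a, fy * c * gy) ∧ p = f * e (a, c * gy) - e (b, fy * c) * g) ∨
      (w = (fx * a, gy * c * fy) ∧
        p = e (1, gy * c) * f * e (a, 1) - e (b, 1) * g * e (1, c * fy)))) ∨
  -- 2.2 Y-intersection only
  (∃ (a : FreeMonoid X) (c d : FreeMonoid Y), fy * c = d * gy ∧
     (fy * c).length < fy.length + gy.length ∧
     ((w = (fx * a * gx, fy * c) ∧ p = f * e (a * gx, c) - e (fx * a, d) * g) ∨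
      (w = (gx * a * fx, fy * c) ∧
        p = e (gx * a, 1) * f * e (1, c) - e (1, d) * g * e (a * fx, 1)))) ∨
  -- 2.3 X,Y-intersection
  (∃ (a b : FreeMonoid X) (c d : FreeMonoid Y), fx * a = b * gx ∧ fy * c = d * gy ∧
     (fx * a).length < fx.length + gx.length ∧ (fy * c).length < fy.length + gy.length ∧
     w = (fx * a, fy * c) ∧ p = f * e (a, c) - e (b, d) * g) ∨
  -- 2.4 X,Y-skew-intersection
  (∃ (a b : FreeMonoid X) (c d : FreeMonoid Y), fx * a = b * gx ∧ c * fy = gy * d ∧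
     (fx * a).length < fx.length + gx.length ∧ (c * fy).length < fy.length + gy.length ∧
     w = (fx * a, c * fy) ∧ p = e (1, c) * f * e (a, 1) - e (b, 1) * g * e (1, d)) ∨
  -- 3.1 X-inclusion and Y-intersection
  (∃ (a b : FreeMonoid X) (c d : FreeMonoid Y), fx = a * gx * b ∧
     ((fy * c = d * gy ∧ (fy * c).length < fy.length + gy.length ∧
        w = (fx, fy * c) ∧ p = f * e (1, c) - e (a, d) * g * e (b, 1)) ∨
      (c * fy = gy * d ∧ (c * fy).length < fy.length + gy.length ∧
        w = (fx, c * fy) ∧ p = e (1, c) * f - e (a, 1) * g * e (b, d)))) ∨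
  -- 3.2 X-intersection and Y-inclusion
  (∃ (a b : FreeMonoid X) (c d : FreeMonoid Y), fx * a = b * gx ∧
     (fx * a).length < fx.length + gx.length ∧
     ((fy = c * gy * d ∧ w = (fx * a, fy) ∧ p = f * e (a, 1) - e (b, c) * g * e (1, d)) ∨
      (gy = c * fy * d ∧ w = (fx * a, gy) ∧ p = e (1, c) * f * e (a, d) - e (b, 1) * g)))

/-- Gröbner–Shirshov basis in `k⟨X⟩ ⊗ k⟨Y⟩`: a set of monic polynomials
all of whose compositions are trivial. -/
def IsGSB {k X Y : Type*} [Ring k] (lt : NW X Y → NW X Y → Prop)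
    (S : Set (MonoidAlgebra k (NW X Y))) : Prop :=
  (∀ s ∈ S, MonicR lt s) ∧
  ∀ f ∈ S, ∀ g ∈ S, ∀ (mf mg : NW X Y) (p : MonoidAlgebra k (NW X Y)) (w : NW X Y),
    IsLeadR lt f mf → IsLeadR lt g mg → IsComp f g mf mg p w → TrivModR lt S w p

/-- the abelianization map `γ : X* → [X]`, with `[X]` the free commutative monoid
on `X` realized as `Multiplicative (Multiset X)`. -/
def gam {X : Type*} (u : FreeMonoid X) : Multiplicative (Multiset X) :=
  Multiplicative.ofAdd (↑u.toList : Multiset X)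

/-- the order on `X*` lifted from a monomial order on `[X]`:
`u > v` iff `γ(u) > γ(v)`, or `γ(u) = γ(v)` and `u >_lex v`. -/
def liftOrd {X : Type*} [LinearOrder X]
    (ltC : Multiplicative (Multiset X) → Multiplicative (Multiset X) → Prop)
    (u v : FreeMonoid X) : Prop :=
  ltC (gam u) (gam v) ∨ (gam u = gam v ∧ List.Lex (· < ·) u.toList v.toList)

/-- `δ` on monomials: the weakly increasing word representing a commutative monomial. -/
noncomputable def dword {X : Type*} [LinearOrder X] (m : Multiplicative (Multiset X)) :
    FreeMonoid X :=
  FreeMonoid.ofList (Multiset.sort (Multiplicative.toAdd m) (· ≤ ·))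

/-- the lexicographic splitting `δ : k[X] → k⟨X⟩`. -/
noncomputable def deltaMap {k X : Type*} [Semiring k] [LinearOrder X]
    (f : MonoidAlgebra k (Multiplicative (Multiset X))) :
    MonoidAlgebra k (FreeMonoid X) :=
  MonoidAlgebra.mapDomain dword f

/-- the set `S₁ = {xᵢxⱼ - xⱼxᵢ : xᵢ > xⱼ}` of commutators in `k⟨X⟩`. -/
noncomputable def commSet (k X : Type*) [Ring k] [LinearOrder X] :
    Set (MonoidAlgebra k (FreeMonoid X)) :=
  {p | ∃ i j : X, j < i ∧
    p = mono k (FreeMonoid.of i * FreeMonoid.of j) - mono k (FreeMonoid.of j * FreeMonoid.of i)}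

/-- `U(m)`: commutative monomials in the variables strictly between the least and the
greatest variable occurring in `m`. -/
def UU {X : Type*} [LinearOrder X] (m : Multiplicative (Multiset X)) :
    Set (Multiplicative (Multiset X)) :=
  {u | ∀ y ∈ Multiplicative.toAdd u,
     (∃ z ∈ Multiplicative.toAdd m, z < y) ∧ (∃ z ∈ Multiplicative.toAdd m, y < z)}

/-- Normal words of `k[X] ⊗ k⟨Y⟩`: the monoid `[X]Y*`. -/
abbrev CW (X Y : Type*) := Multiplicative (Multiset X) × FreeMonoid Y

/-- the order on `[X]Y*`: compare the `Y`-part first, then the `[X]`-part. -/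
def cwOrd {X Y : Type*}
    (ltC : Multiplicative (Multiset X) → Multiplicative (Multiset X) → Prop)
    (ltY : FreeMonoid Y → FreeMonoid Y → Prop) (u v : CW X Y) : Prop :=
  ltY u.2 v.2 ∨ (u.2 = v.2 ∧ ltC u.1 v.1)

/-- the order on `X*Y*` lifted from the order on `[X]Y*`, breaking ties by `lex`
on the `X`-component. -/
def liftNW {X Y : Type*} [LinearOrder X]
    (ltC : Multiplicative (Multiset X) → Multiplicative (Multiset X) → Prop)
    (ltY : FreeMonoid Y → FreeMonoid Y → Prop) (u v : NW X Y) : Prop :=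
  cwOrd ltC ltY (gam u.1, u.2) (gam v.1, v.2) ∨
    ((gam u.1 = gam v.1 ∧ u.2 = v.2) ∧ List.Lex (· < ·) u.1.toList v.1.toList)

/-- `δ : k[X] ⊗ k⟨Y⟩ → k⟨X⟩ ⊗ k⟨Y⟩`, the lexicographic splitting extended by the
identity on `Y`-words. -/
noncomputable def deltaNW {k X Y : Type*} [Semiring k] [LinearOrder X]
    (f : MonoidAlgebra k (CW X Y)) : MonoidAlgebra k (NW X Y) :=
  MonoidAlgebra.mapDomain (fun m : CW X Y => ((dword m.1, m.2) : NW X Y)) f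

/-- Mikhalev–Zolotykh compositions in `k[X] ⊗ k⟨Y⟩`: inclusion `C₁`, overlap `C₂`
and external `C₃` compositions, where `mf`, `mg` are the leading words of `f`, `g`,
and `L = lcm(mf^X, mg^X)`. -/
def MZComp {k X Y : Type*} [Ring k] [DecidableEq X]
    (ltC : Multiplicative (Multiset X) → Multiplicative (Multiset X) → Prop)
    (f g : MonoidAlgebra k (CW X Y)) (mf mg : CW X Y)
    (p : MonoidAlgebra k (CW X Y)) (w : CW X Y) : Prop :=
  let e : CW X Y → MonoidAlgebra k (CW X Y) := fun m => mono k m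
  let fX := Multiplicative.toAdd mf.1; let gX := Multiplicative.toAdd mg.1
  let L : Multiset X := fX ∪ gX
  let Lf : Multiplicative (Multiset X) := Multiplicative.ofAdd (L - fX)
  let Lg : Multiplicative (Multiset X) := Multiplicative.ofAdd (L - gX)
  -- C₁ : inclusion
  (∃ c d : FreeMonoid Y, mf.2 = c * mg.2 * d ∧
     (mf.2 = mg.2 → (mg.1 = mf.1 ∨ ltC mg.1 mf.1)) ∧ (mg.2 = 1 → c = 1) ∧
     w = (Multiplicative.ofAdd L, mf.2) ∧
     p = e (Lf, 1) * f - e (Lg, c) * g * e (1, d)) ∨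
  -- C₂ : overlap
  (∃ c d c₀ : FreeMonoid Y, c₀ ≠ 1 ∧ mf.2 = c * c₀ ∧ mg.2 = c₀ * d ∧
     w = (Multiplicative.ofAdd L, mf.2 * d) ∧
     p = e (Lf, 1) * f * e (1, d) - e (Lg, c) * g) ∨
  -- C₃ : external
  (∃ c₀ : FreeMonoid Y, fX ∩ gX ≠ 0 ∧ mf.2 ≠ 1 ∧ mg.2 ≠ 1 ∧
     w = (Multiplicative.ofAdd L, mf.2 * c₀ * mg.2) ∧
     p = e (Lf, 1) * f * e (1, c₀ * mg.2) - e (Lg, mf.2 * c₀) * g)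

/-- Gröbner–Shirshov basis in `k[X] ⊗ k⟨Y⟩` in the sense of Mikhalev–Zolotykh. -/
def MZGSB {k X Y : Type*} [Ring k] [DecidableEq X]
    (ltC : Multiplicative (Multiset X) → Multiplicative (Multiset X) → Prop)
    (ltY : FreeMonoid Y → FreeMonoid Y → Prop)
    (S : Set (MonoidAlgebra k (CW X Y))) : Prop :=
  (∀ s ∈ S, MonicR (cwOrd ltC ltY) s) ∧
  ∀ f ∈ S, ∀ g ∈ S, ∀ (mf mg : CW X Y) (p : MonoidAlgebra k (CW X Y)) (w : CW X Y),
    IsLeadR (cwOrd ltC ltY) f mf → IsLeadR (cwOrd ltC ltY) g mg →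
    MZComp ltC f g mf mg p w → TrivModR (cwOrd ltC ltY) S w p

/-! ### Auxiliary lemmas -/

section MAHelpers

theorem maD_comp {k α β γ : Type*} [Semiring k] {f : α → β} {g : β → γ}
    {v : MonoidAlgebra k α} :
    MonoidAlgebra.mapDomain (g ∘ f) v
      = MonoidAlgebra.mapDomain g (MonoidAlgebra.mapDomain f v) :=
  congrArg MonoidAlgebra.ofCoeff Finsupp.mapDomain_comp

theorem maD_congr {k α β : Type*} [Semiring k] {v : MonoidAlgebra k α} {f g : α → β}
    (h : ∀ x ∈ v.coeff.support, f x = g x) :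
    MonoidAlgebra.mapDomain f v = MonoidAlgebra.mapDomain g v :=
  congrArg MonoidAlgebra.ofCoeff (Finsupp.mapDomain_congr h)

theorem maD_apply {k α β : Type*} [Semiring k] {f : α → β} (hf : Function.Injective f)
    (x : MonoidAlgebra k α) (a : α) :
    (MonoidAlgebra.mapDomain f x).coeff (f a) = x.coeff a :=
  Finsupp.mapDomain_apply hf x.coeff a

theorem maD_support_of_injective {k α β : Type*} [Semiring k] [DecidableEq β] {f : α → β}
    (hf : Function.Injective f) (x : MonoidAlgebra k α) :
    (MonoidAlgebra.mapDomain f x).coeff.support = Finset.image f x.coeff.support :=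
  Finsupp.mapDomain_support_of_injective hf x.coeff

theorem maD_smul {k α β : Type*} [Semiring k] {f : α → β} (b : k) (v : MonoidAlgebra k α) :
    MonoidAlgebra.mapDomain f (b • v) = b • MonoidAlgebra.mapDomain f v :=
  congrArg MonoidAlgebra.ofCoeff (Finsupp.mapDomain_smul b v.coeff)

theorem maD_finset_sum {k α β ι : Type*} [Semiring k] {f : α → β} {s : Finset ι}
    {v : ι → MonoidAlgebra k α} :
    MonoidAlgebra.mapDomain f (∑ i ∈ s, v i) = ∑ i ∈ s, MonoidAlgebra.mapDomain f (v i) := by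
  apply MonoidAlgebra.coeff_injective
  show Finsupp.mapDomain f (∑ i ∈ s, v i).coeff = _
  rw [MonoidAlgebra.coeff_sum, MonoidAlgebra.coeff_sum, Finsupp.mapDomain_finset_sum]
  rfl

end MAHelpers

section GenHelpers

variable {k M : Type*}

theorem mono_mul [Semiring k] [Monoid M] (a b : M) :
    mono k (a * b) = mono k a * mono k b := by
  simp only [mono, MonoidAlgebra.of_apply, MonoidAlgebra.single_mul_single, mul_one]

theorem mono_one [Semiring k] [Monoid M] : mono k (1 : M) = 1 :=
  map_one (MonoidAlgebra.of k M)

theorem mono_apply_self [Semiring k] [Monoid M] (a : M) : (mono k a).coeff a = 1 := by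
  simp [mono]

theorem conj_eq [Semiring k] [Monoid M] (a b : M) (h : MonoidAlgebra k M) :
    mono k a * h * mono k b = MonoidAlgebra.mapDomain (fun x => a * x * b) h := by
  induction h using MonoidAlgebra.induction_linear with
  | zero => simp [MonoidAlgebra.mapDomain_zero]
  | add f g hf hg => rw [mul_add, add_mul, hf, hg, MonoidAlgebra.mapDomain_add]
  | single x c =>
      rw [MonoidAlgebra.mapDomain_single]
      simp only [mono, MonoidAlgebra.of_apply]
      rw [MonoidAlgebra.single_mul_single, MonoidAlgebra.single_mul_single, one_mul, mul_one]

theorem split_lead [Semiring k] [Monoid M] [DecidableEq M] (s : MonoidAlgebra k M) (m : M)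
    (hm : m ∈ s.coeff.support) (h1 : s.coeff m = 1) :
    s = mono k m + ∑ u ∈ s.coeff.support.erase m, s.coeff u • mono k u := by
  classical
  have hs : ∑ u ∈ s.coeff.support, s.coeff u • mono k u = s := by
    have := MonoidAlgebra.sum_coeff_single s
    rw [Finsupp.sum] at this
    calc ∑ u ∈ s.coeff.support, s.coeff u • mono k u
        = ∑ u ∈ s.coeff.support, MonoidAlgebra.single u (s.coeff u) := by
          refine Finset.sum_congr rfl fun u _ => ?_
          simp [mono, MonoidAlgebra.of_apply, MonoidAlgebra.smul_single']
      _ = s := this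
  calc s = ∑ u ∈ s.coeff.support, s.coeff u • mono k u := hs.symm
    _ = s.coeff m • mono k m + ∑ u ∈ s.coeff.support.erase m, s.coeff u • mono k u :=
        (Finset.add_sum_erase _ _ hm).symm
    _ = mono k m + ∑ u ∈ s.coeff.support.erase m, s.coeff u • mono k u := by rw [h1, one_smul]

section Triv

variable [CommSemiring k] [Monoid M] {lt : M → M → Prop} {S : Set (MonoidAlgebra k M)} {w : M}

theorem triv_zero : TrivModR lt S w 0 :=
  ⟨0, Fin.elim0, Fin.elim0, Fin.elim0, Fin.elim0, fun i => i.elim0, by simp, fun i => i.elim0⟩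

theorem triv_add {p q : MonoidAlgebra k M} (hp : TrivModR lt S w p) (hq : TrivModR lt S w q) :
    TrivModR lt S w (p + q) := by
  obtain ⟨n₁, α₁, a₁, b₁, s₁, hs₁, he₁, hl₁⟩ := hp
  obtain ⟨n₂, α₂, a₂, b₂, s₂, hs₂, he₂, hl₂⟩ := hq
  refine ⟨n₁ + n₂, Fin.append α₁ α₂, Fin.append a₁ a₂, Fin.append b₁ b₂, Fin.append s₁ s₂,
    fun i => ?_, ?_, fun i => ?_⟩
  · refine i.addCases (fun j => ?_) (fun j => ?_) <;>
      simp only [Fin.append_left, Fin.append_right] <;> [exact hs₁ j; exact hs₂ j]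
  · rw [Fin.sum_univ_add, he₁, he₂]
    congr 1 <;> refine Finset.sum_congr rfl fun j _ => ?_ <;>
      simp only [Fin.append_left, Fin.append_right]
  · refine i.addCases (fun j => ?_) (fun j => ?_) <;>
      simp only [Fin.append_left, Fin.append_right] <;> [exact hl₁ j; exact hl₂ j]

theorem triv_single (α : k) (a b : M) {σ : MonoidAlgebra k M} (hσ : σ ∈ S) {m : M}
    (hlead : IsLeadR lt σ m) (hlt : lt (a * m * b) w) :
    TrivModR lt S w (α • (mono k a * σ * mono k b)) :=
  ⟨1, fun _ => α, fun _ => a, fun _ => b, fun _ => σ, fun _ => hσ, by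
    rw [Fin.sum_univ_one], fun _ => ⟨m, hlead, hlt⟩⟩

theorem triv_finset_sum {ι : Type*} (F : Finset ι) (h : ι → MonoidAlgebra k M)
    (H : ∀ x ∈ F, TrivModR lt S w (h x)) : TrivModR lt S w (∑ x ∈ F, h x) := by
  classical
  induction F using Finset.induction with
  | empty => simpa using (triv_zero : TrivModR lt S w 0)
  | @insert x F hx ih =>
      rw [Finset.sum_insert hx]
      exact triv_add (H _ (Finset.mem_insert_self _ _))
        (ih fun y hy => H _ (Finset.mem_insert_of_mem hy))

theorem triv_conj (hcompat : ∀ u v w₁ w₂ : M, lt u v → lt (w₁ * u * w₂) (w₁ * v * w₂))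
    (c d : M) {p : MonoidAlgebra k M} (hp : TrivModR lt S w p) :
    TrivModR lt S (c * w * d) (mono k c * p * mono k d) := by
  obtain ⟨n, α, a, b, s, hs, he, hl⟩ := hp
  refine ⟨n, α, fun i => c * a i, fun i => b i * d, s, hs, ?_, fun i => ?_⟩
  · rw [he, Finset.mul_sum, Finset.sum_mul]
    refine Finset.sum_congr rfl fun i _ => ?_
    rw [mul_smul_comm, smul_mul_assoc, mono_mul, mono_mul]
    simp only [mul_assoc]
  · obtain ⟨m, hlm, hlt⟩ := hl i
    refine ⟨m, hlm, ?_⟩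
    have := hcompat _ _ c d hlt
    simpa only [mul_assoc] using this

end Triv

theorem triv_neg [CommRing k] [Monoid M] {lt : M → M → Prop} {S : Set (MonoidAlgebra k M)} {w : M}
    {p : MonoidAlgebra k M} (hp : TrivModR lt S w p) : TrivModR lt S w (-p) := by
  obtain ⟨n, α, a, b, s, hs, he, hl⟩ := hp
  refine ⟨n, fun i => -α i, a, b, s, hs, ?_, hl⟩
  rw [he, ← Finset.sum_neg_distrib]
  exact Finset.sum_congr rfl fun i _ => (neg_smul _ _).symm

/-- The two-sided "disjoint occurrences" triviality lemma. -/
theorem t2abs [CommRing k] [Monoid M] {lt : M → M → Prop}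
    (hcompat : ∀ u v w₁ w₂ : M, lt u v → lt (w₁ * u * w₂) (w₁ * v * w₂))
    {S : Set (MonoidAlgebra k M)} {s t : MonoidAlgebra k M} {m n : M}
    (hs : s ∈ S) (ht : t ∈ S) (hm : IsLeadR lt s m) (hn : IsLeadR lt t n)
    (hm1 : s.coeff m = 1) (hn1 : t.coeff n = 1) (c u d : M) :
    TrivModR lt S (c * m * u * n * d)
      (mono k c * s * mono k (u * n * d) - mono k (c * m * u) * t * mono k d) := by
  classical
  have key : mono k c * s * mono k (u * n * d) - mono k (c * m * u) * t * mono k d =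
      (∑ v ∈ t.coeff.support.erase n, (-(t.coeff v)) • (mono k c * s * mono k (u * v * d))) +
      (∑ u' ∈ s.coeff.support.erase m, (s.coeff u') • (mono k (c * u' * u) * t * mono k d)) := by
    have e1 : mono k c * s * mono k (u * n * d)
        = mono k c * s * mono k u * t * mono k d
          - ∑ v ∈ t.coeff.support.erase n, (t.coeff v) • (mono k c * s * mono k (u * v * d)) := by
      have hsplit := split_lead t n hn.1 hn1
      calc mono k c * s * mono k (u * n * d)
          = mono k c * s * mono k u * mono k n * mono k d := by
            rw [mono_mul, mono_mul]; simp only [mul_assoc]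
        _ = mono k c * s * mono k u *
              (t - ∑ v ∈ t.coeff.support.erase n, t.coeff v • mono k v) * mono k d := by
            rw [eq_sub_of_add_eq hsplit.symm]
        _ = _ := by
            rw [mul_sub, sub_mul, Finset.mul_sum, Finset.sum_mul]
            congr 1
            refine Finset.sum_congr rfl fun v _ => ?_
            rw [mul_smul_comm, smul_mul_assoc, mono_mul, mono_mul]
            simp only [mul_assoc]
    have e2 : mono k (c * m * u) * t * mono k d
        = mono k c * s * mono k u * t * mono k d
          - ∑ u' ∈ s.coeff.support.erase m, (s.coeff u') • (mono k (c * u' * u) * t * mono k d) := by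
      have hsplit := split_lead s m hm.1 hm1
      have e3 : mono k c * s * mono k u
          = mono k (c * m * u) + ∑ u' ∈ s.coeff.support.erase m, (s.coeff u') • mono k (c * u' * u) := by
        calc mono k c * s * mono k u
            = mono k c * (mono k m + ∑ u' ∈ s.coeff.support.erase m, s.coeff u' • mono k u') * mono k u := by
              rw [← hsplit]
          _ = _ := by
              rw [mul_add, add_mul, Finset.mul_sum, Finset.sum_mul]
              congr 1
              · rw [mono_mul, mono_mul]
              · refine Finset.sum_congr rfl fun u' _ => ?_
                rw [mul_smul_comm, smul_mul_assoc, mono_mul, mono_mul]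
      rw [e3, add_mul, add_mul, Finset.sum_mul, Finset.sum_mul]
      have : ∀ u' ∈ s.coeff.support.erase m,
          (s.coeff u') • mono k (c * u' * u) * t * mono k d
            = (s.coeff u') • (mono k (c * u' * u) * t * mono k d) := fun u' _ => by
        rw [smul_mul_assoc, smul_mul_assoc]
      rw [Finset.sum_congr rfl this]
      abel
    have hneg : (∑ v ∈ t.coeff.support.erase n, (-(t.coeff v)) • (mono k c * s * mono k (u * v * d)))
        = -∑ v ∈ t.coeff.support.erase n, (t.coeff v) • (mono k c * s * mono k (u * v * d)) := by
      rw [← Finset.sum_neg_distrib]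
      exact Finset.sum_congr rfl fun v _ => neg_smul _ _
    rw [e1, e2, hneg]
    abel
  rw [key]
  refine triv_add (triv_finset_sum _ _ fun v hv => ?_) (triv_finset_sum _ _ fun u' hu' => ?_)
  · refine triv_single _ _ _ hs hm ?_
    have hvlt : lt v n := hn.2 v (Finset.mem_of_mem_erase hv) (Finset.ne_of_mem_erase hv)
    have := hcompat _ _ (c * m * u) d hvlt
    simpa only [mul_assoc] using this
  · refine triv_single _ _ _ ht hn ?_
    have hult : lt u' m := hm.2 u' (Finset.mem_of_mem_erase hu') (Finset.ne_of_mem_erase hu')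
    have := hcompat _ _ c (u * n * d) hult
    simpa only [mul_assoc] using this

end GenHelpers

section WordLemmas

theorem lex_append_left {A : Type*} (r : A → A → Prop) (w : List A) {u v : List A}
    (h : List.Lex r u v) : List.Lex r (w ++ u) (w ++ v) := by
  induction w with
  | nil => simpa
  | cons a w ih => exact List.Lex.cons ih

theorem lex_append_right {A : Type*} (r : A → A → Prop) {u v : List A} (w : List A)
    (h : List.Lex r u v) : u.length = v.length → List.Lex r (u ++ w) (v ++ w) := by
  induction h with
  | nil => intro hlen; simp at hlen
  | rel h => intro _; exact List.Lex.rel h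
  | cons h ih => intro hlen; exact List.Lex.cons (ih (by simpa using hlen))

theorem lex_asymm {A : Type*} {r : A → A → Prop} (hr : ∀ a b, r a b → r b a → False) :
    ∀ {u v : List A}, List.Lex r u v → List.Lex r v u → False := by
  intro u v h₁
  induction h₁ with
  | nil => intro h₂; cases h₂
  | @rel a l₁ b l₂ h =>
      intro h₂
      cases h₂ with
      | rel h' => exact hr _ _ h h'
      | cons h' => exact hr _ _ h h
  | @cons a l₁ l₂ h ih =>
      intro h₂
      cases h₂ with
      | rel h' => exact hr _ _ h' h'
      | cons h' => exact ih h'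

theorem degLex_compat {A : Type*} (r : A → A → Prop) :
    ∀ u v w₁ w₂ : FreeMonoid A, degLex r u v → degLex r (w₁ * u * w₂) (w₁ * v * w₂) := by
  intro u v w₁ w₂ h
  rcases h with h | ⟨hlen, hlex⟩
  · left; simp only [FreeMonoid.length_mul]; omega
  · right
    refine ⟨by simp only [FreeMonoid.length_mul, hlen], ?_⟩
    have : (w₁ * u * w₂).toList = w₁.toList ++ (u.toList ++ w₂.toList) := by
      rw [FreeMonoid.toList_mul, FreeMonoid.toList_mul, List.append_assoc]
    rw [this, show (w₁ * v * w₂).toList = w₁.toList ++ (v.toList ++ w₂.toList) by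
      rw [FreeMonoid.toList_mul, FreeMonoid.toList_mul, List.append_assoc]]
    exact lex_append_left r _ (lex_append_right r _ hlex hlen)

theorem degLex_asymm {A : Type*} [LinearOrder A] {u v : FreeMonoid A}
    (h1 : degLex (· < ·) u v) (h2 : degLex (· < ·) v u) : False := by
  rcases h1 with h1 | ⟨hl1, h1⟩ <;> rcases h2 with h2 | ⟨hl2, h2⟩
  · omega
  · omega
  · omega
  · exact lex_asymm (fun a b hab hba => absurd hba (not_lt.2 hab.le)) h1 h2

theorem degLex_irrefl_one {A : Type*} {r : A → A → Prop} :
    ¬ degLex r (1 : FreeMonoid A) 1 := by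
  rintro (h | ⟨-, h⟩)
  · exact absurd h (lt_irrefl _)
  · cases h

theorem lead_unique {k M : Type*} [Semiring k] {lt : M → M → Prop}
    (hasymm : ∀ u v : M, lt u v → lt v u → False) {f : MonoidAlgebra k M} {m m' : M}
    (hm : IsLeadR lt f m) (hm' : IsLeadR lt f m') : m = m' := by
  by_contra hne
  exact hasymm _ _ (hm'.2 m hm.1 hne) (hm.2 m' hm'.1 (Ne.symm hne))

theorem fm_split {Z : Type*} (a x b y : FreeMonoid Z) (h : a * x = b * y)
    (hl : a.length ≤ b.length) : ∃ c, b = a * c ∧ x = c * y := by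
  have h' : a.toList ++ x.toList = b.toList ++ y.toList := by
    rw [← FreeMonoid.toList_mul, ← FreeMonoid.toList_mul, h]
  rcases List.append_eq_append_iff.1 h' with ⟨c, hc1, hc2⟩ | ⟨c, hc1, hc2⟩
  · refine ⟨FreeMonoid.ofList c, ?_, ?_⟩
    · apply FreeMonoid.toList.injective
      rw [FreeMonoid.toList_mul, FreeMonoid.toList_ofList]; exact hc1
    · apply FreeMonoid.toList.injective
      rw [FreeMonoid.toList_mul, FreeMonoid.toList_ofList]; exact hc2
  · have hcl : c = [] := by
      have := congrArg List.length hc1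
      simp only [List.length_append] at this
      have ha : a.length = a.toList.length := rfl
      have hb : b.length = b.toList.length := rfl
      have hc0 : c.length = 0 := by omega
      exact List.length_eq_zero_iff.mp hc0
    subst hcl
    simp only [List.append_nil] at hc1
    refine ⟨1, ?_, ?_⟩
    · apply FreeMonoid.toList.injective
      rw [FreeMonoid.toList_mul]; simp [hc1]
    · apply FreeMonoid.toList.injective
      rw [FreeMonoid.toList_mul]; simp [hc2]

end WordLemmas

section KeyF

variable {k Z : Type*} [CommRing k] [LinearOrder Z]

private theorem keyF_aux {S : Set (MonoidAlgebra k (FreeMonoid Z))}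
    (hS : FIsGSB (degLex ((· < ·) : Z → Z → Prop)) S)
    {s t : MonoidAlgebra k (FreeMonoid Z)} {m n : FreeMonoid Z}
    (hs : s ∈ S) (ht : t ∈ S)
    (hm : IsLeadR (degLex (· < ·)) s m) (hn : IsLeadR (degLex (· < ·)) t n)
    (hm1 : s.coeff m = 1) (hn1 : t.coeff n = 1)
    (c₁ d₁ c₂ d₂ : FreeMonoid Z) (heq : c₁ * m * d₁ = c₂ * n * d₂)
    (hlen : c₁.length ≤ c₂.length) :
    TrivModR (degLex (· < ·)) S (c₁ * m * d₁)
      (mono k c₁ * s * mono k d₁ - mono k c₂ * t * mono k d₂) := by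
  obtain ⟨U, hU, hrest⟩ := fm_split c₁ (m * d₁) c₂ (n * d₂)
    (by simpa only [mul_assoc] using heq) hlen
  by_cases h1 : m.length ≤ U.length
  · -- disjoint occurrences
    obtain ⟨E, hE, hd⟩ := fm_split m d₁ U (n * d₂) hrest h1
    have htriv := t2abs (degLex_compat _) hs ht hm hn hm1 hn1 c₁ E d₂
    have hword : c₁ * m * E * n * d₂ = c₁ * m * d₁ := by
      rw [hd]; simp only [mul_assoc]
    have hpoly : mono k c₁ * s * mono k (E * n * d₂) - mono k (c₁ * m * E) * t * mono k d₂
        = mono k c₁ * s * mono k d₁ - mono k c₂ * t * mono k d₂ := by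
      rw [hd, hU, hE]
      simp only [mono_mul, mul_assoc]
    rw [hword, hpoly] at htriv
    exact htriv
  · push_neg at h1
    by_cases h2 : m.length ≤ (U * n).length
    · -- intersection composition
      obtain ⟨B, hB, hd⟩ := fm_split m d₁ (U * n) d₂
        (by rw [hrest, mul_assoc]) h2
      have hlt : (m * B).length < m.length + n.length := by
        have h3 : (m * B).length = (U * n).length := by rw [hB]
        rw [FreeMonoid.length_mul] at h3 ⊢
        rw [FreeMonoid.length_mul] at h3
        omega
      have hmb : m * B = U * n := hB.symm
      have htriv := (hS.2 s hs t ht m n hm hn).1 U B hmb (hmb ▸ hlt)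
      have htriv2 := triv_conj (degLex_compat _) c₁ d₂ htriv
      have hword : c₁ * (m * B) * d₂ = c₁ * m * d₁ := by
        rw [hd]; simp only [mul_assoc]
      have hpoly : mono k c₁ * (s * mono k B - mono k U * t) * mono k d₂
          = mono k c₁ * s * mono k d₁ - mono k c₂ * t * mono k d₂ := by
        rw [hd, hU]
        simp only [mono_mul, mul_sub, sub_mul, mul_assoc]
      rw [hword, hpoly] at htriv2
      exact htriv2
    · -- inclusion composition
      push_neg at h2
      obtain ⟨B, hB, hd2⟩ := fm_split (U * n) d₂ m d₁
        (by rw [hrest, mul_assoc]) h2.le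
      have htriv := (hS.2 s hs t ht m n hm hn).2 U B hB
      have htriv2 := triv_conj (degLex_compat _) c₁ d₁ htriv
      have hpoly : mono k c₁ * (s - mono k U * t * mono k B) * mono k d₁
          = mono k c₁ * s * mono k d₁ - mono k c₂ * t * mono k d₂ := by
        rw [hd2, hU]
        simp only [mono_mul, mul_sub, sub_mul, mul_assoc]
      rw [hpoly] at htriv2
      exact htriv2

theorem keyF {S : Set (MonoidAlgebra k (FreeMonoid Z))}
    (hS : FIsGSB (degLex ((· < ·) : Z → Z → Prop)) S)
    {s t : MonoidAlgebra k (FreeMonoid Z)} {m n : FreeMonoid Z}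
    (hs : s ∈ S) (ht : t ∈ S)
    (hm : IsLeadR (degLex (· < ·)) s m) (hn : IsLeadR (degLex (· < ·)) t n)
    (c₁ d₁ c₂ d₂ : FreeMonoid Z) (heq : c₁ * m * d₁ = c₂ * n * d₂) :
    TrivModR (degLex (· < ·)) S (c₁ * m * d₁)
      (mono k c₁ * s * mono k d₁ - mono k c₂ * t * mono k d₂) := by
  obtain ⟨m0, hm0, hm01⟩ := hS.1 s hs
  have hm1 : s.coeff m = 1 := by
    rw [lead_unique (fun u v h h' => degLex_asymm h h') hm hm0]; exact hm01
  obtain ⟨n0, hn0, hn01⟩ := hS.1 t ht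
  have hn1 : t.coeff n = 1 := by
    rw [lead_unique (fun u v h h' => degLex_asymm h h') hn hn0]; exact hn01
  rcases le_or_gt c₁.length c₂.length with hle | hlt
  · exact keyF_aux hS hs ht hm hn hm1 hn1 c₁ d₁ c₂ d₂ heq hle
  · have htriv := keyF_aux hS ht hs hn hm hn1 hm1 c₂ d₂ c₁ d₁ heq.symm hlt.le
    have := triv_neg htriv
    rw [neg_sub] at this
    rwa [heq]

end KeyF

section Transfer

theorem isLead_map_fwd {k M N : Type*} [Semiring k] {ι : M → N} (hinj : Function.Injective ι)
    {ltM : M → M → Prop} {ltN : N → N → Prop}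
    (hord : ∀ u v : M, ltN (ι u) (ι v) ↔ ltM u v)
    {f : MonoidAlgebra k M} {m : M} (h : IsLeadR ltM f m) :
    IsLeadR ltN (MonoidAlgebra.mapDomain ι f) (ι m) := by
  classical
  constructor
  · rw [maD_support_of_injective hinj]
    exact Finset.mem_image_of_mem _ h.1
  · intro u hu hne
    rw [maD_support_of_injective hinj] at hu
    obtain ⟨u', hu', rfl⟩ := Finset.mem_image.1 hu
    exact (hord _ _).2 (h.2 u' hu' fun e => hne (by rw [e]))

theorem isLead_map_bwd {k M N : Type*} [Semiring k] {ι : M → N} (hinj : Function.Injective ι)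
    {ltM : M → M → Prop} {ltN : N → N → Prop}
    (hord : ∀ u v : M, ltN (ι u) (ι v) ↔ ltM u v)
    {f : MonoidAlgebra k M} {w : N} (h : IsLeadR ltN (MonoidAlgebra.mapDomain ι f) w) :
    ∃ m, w = ι m ∧ IsLeadR ltM f m := by
  classical
  have hsup := maD_support_of_injective hinj f
  have hn := h.1
  rw [hsup] at hn
  obtain ⟨m, hm, rfl⟩ := Finset.mem_image.1 hn
  refine ⟨m, rfl, hm, fun u hu hne => ?_⟩
  refine (hord _ _).1 (h.2 (ι u) ?_ fun e => hne (hinj e))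
  rw [hsup]; exact Finset.mem_image_of_mem _ hu

theorem lexNW_embX_iff {X Y : Type*} {ltX : FreeMonoid X → FreeMonoid X → Prop}
    {ltY : FreeMonoid Y → FreeMonoid Y → Prop} (hY : ¬ ltY 1 1) (u v : FreeMonoid X) :
    lexNW ltX ltY (u, 1) (v, 1) ↔ ltX u v := by
  constructor
  · rintro (h | ⟨-, h⟩)
    · exact h
    · exact absurd h hY
  · exact Or.inl

theorem lexNW_embY_iff {X Y : Type*} {ltX : FreeMonoid X → FreeMonoid X → Prop}
    {ltY : FreeMonoid Y → FreeMonoid Y → Prop} (hX : ¬ ltX 1 1) (u v : FreeMonoid Y) :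
    lexNW ltX ltY (1, u) (1, v) ↔ ltY u v := by
  constructor
  · rintro (h | ⟨-, h⟩)
    · exact absurd h hX
    · exact h
  · exact fun h => Or.inr ⟨rfl, h⟩

theorem lexNW_compat {X Y : Type*} (ltX : FreeMonoid X → FreeMonoid X → Prop)
    (ltY : FreeMonoid Y → FreeMonoid Y → Prop)
    (hX : ∀ u v w₁ w₂ : FreeMonoid X, ltX u v → ltX (w₁ * u * w₂) (w₁ * v * w₂))
    (hY : ∀ u v w₁ w₂ : FreeMonoid Y, ltY u v → ltY (w₁ * u * w₂) (w₁ * v * w₂)) :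
    ∀ u v w₁ w₂ : NW X Y, lexNW ltX ltY u v → lexNW ltX ltY (w₁ * u * w₂) (w₁ * v * w₂) := by
  rintro u v w₁ w₂ (h | ⟨h1, h2⟩)
  · exact Or.inl (hX _ _ _ _ h)
  · exact Or.inr ⟨by simp only [Prod.fst_mul, h1], hY _ _ _ _ h2⟩

theorem mapDomain_sub {α β M : Type*} [Ring M] (f : α → β) (p q : MonoidAlgebra M α) :
    MonoidAlgebra.mapDomain f (p - q) = MonoidAlgebra.mapDomain f p - MonoidAlgebra.mapDomain f q :=
  congrArg MonoidAlgebra.ofCoeff (Finsupp.mapDomain_sub (v₁ := p.coeff) (v₂ := q.coeff))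

theorem mapDomain_conj {k M N : Type*} [Semiring k] [Monoid M] (G : M → N)
    (a b : M) (σ : MonoidAlgebra k M) :
    MonoidAlgebra.mapDomain G (mono k a * σ * mono k b)
      = MonoidAlgebra.mapDomain (fun x => G (a * x * b)) σ := by
  rw [conj_eq, ← maD_comp]
  rfl

theorem conj_map {k M N : Type*} [Semiring k] [Monoid M] [Monoid N] (ι : M → N)
    (A B : N) (σ : MonoidAlgebra k M) {σ' : MonoidAlgebra k N}
    (hσ' : σ' = MonoidAlgebra.mapDomain ι σ) :
    mono k A * σ' * mono k B = MonoidAlgebra.mapDomain (fun x => A * ι x * B) σ := by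
  rw [hσ', conj_eq, ← maD_comp]
  rfl

theorem embX_inj {X Y : Type*} :
    Function.Injective (fun u : FreeMonoid X => ((u, 1) : NW X Y)) :=
  fun _ _ h => congrArg Prod.fst h

theorem embY_inj {X Y : Type*} :
    Function.Injective (fun v : FreeMonoid Y => ((1, v) : NW X Y)) :=
  fun _ _ h => congrArg Prod.snd h

variable {k X Y : Type*} [CommRing k] [LinearOrder X] [LinearOrder Y]

theorem liftTrivX {S₁ : Set (MonoidAlgebra k (FreeMonoid X))}
    {T : Set (MonoidAlgebra k (NW X Y))}
    (hsub : ∀ p ∈ S₁, MonoidAlgebra.mapDomain (fun u : FreeMonoid X => ((u, 1) : NW X Y)) p ∈ T)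
    (wx : FreeMonoid X) (wy : FreeMonoid Y) {q : MonoidAlgebra k (FreeMonoid X)}
    (h : TrivModR (degLex (· < ·)) S₁ wx q) :
    TrivModR (lexNW (degLex ((· < ·) : X → X → Prop)) (degLex ((· < ·) : Y → Y → Prop))) T
      ((wx, wy) : NW X Y) (MonoidAlgebra.mapDomain (fun u : FreeMonoid X => ((u, wy) : NW X Y)) q) := by
  obtain ⟨n, α, a, b, σ, hσ, he, hl⟩ := h
  refine ⟨n, α, fun i => ((a i, wy) : NW X Y), fun i => ((b i, 1) : NW X Y),
    fun i => MonoidAlgebra.mapDomain (fun u : FreeMonoid X => ((u, 1) : NW X Y)) (σ i),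
    fun i => hsub _ (hσ i), ?_, fun i => ?_⟩
  · rw [he, maD_finset_sum]
    refine Finset.sum_congr rfl fun i _ => ?_
    rw [maD_smul, mapDomain_conj, conj_map _ _ _ _ rfl]
    refine congrArg _ (maD_congr fun x _ => ?_)
    simp [Prod.ext_iff, Prod.fst_mul, Prod.snd_mul, mul_one, one_mul]
  · obtain ⟨m, hlead, hlt⟩ := hl i
    refine ⟨((m, 1) : NW X Y),
      isLead_map_fwd embX_inj (fun u v => lexNW_embX_iff degLex_irrefl_one u v) hlead, ?_⟩
    have hprod : ((a i, wy) : NW X Y) * (m, 1) * (b i, 1) = ((a i * m * b i, wy) : NW X Y) := by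
      simp [Prod.ext_iff, Prod.fst_mul, Prod.snd_mul]
    rw [hprod]
    exact Or.inl hlt

theorem liftTrivY {S₂ : Set (MonoidAlgebra k (FreeMonoid Y))}
    {T : Set (MonoidAlgebra k (NW X Y))}
    (hsub : ∀ p ∈ S₂, MonoidAlgebra.mapDomain (fun v : FreeMonoid Y => ((1, v) : NW X Y)) p ∈ T)
    (wx : FreeMonoid X) (wy : FreeMonoid Y) {q : MonoidAlgebra k (FreeMonoid Y)}
    (h : TrivModR (degLex (· < ·)) S₂ wy q) :
    TrivModR (lexNW (degLex ((· < ·) : X → X → Prop)) (degLex ((· < ·) : Y → Y → Prop))) T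
      ((wx, wy) : NW X Y) (MonoidAlgebra.mapDomain (fun v : FreeMonoid Y => ((wx, v) : NW X Y)) q) := by
  obtain ⟨n, α, a, b, σ, hσ, he, hl⟩ := h
  refine ⟨n, α, fun i => ((wx, a i) : NW X Y), fun i => ((1, b i) : NW X Y),
    fun i => MonoidAlgebra.mapDomain (fun v : FreeMonoid Y => ((1, v) : NW X Y)) (σ i),
    fun i => hsub _ (hσ i), ?_, fun i => ?_⟩
  · rw [he, maD_finset_sum]
    refine Finset.sum_congr rfl fun i _ => ?_
    rw [maD_smul, mapDomain_conj, conj_map _ _ _ _ rfl]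
    refine congrArg _ (maD_congr fun x _ => ?_)
    simp [Prod.ext_iff, Prod.fst_mul, Prod.snd_mul, mul_one, one_mul]
  · obtain ⟨m, hlead, hlt⟩ := hl i
    refine ⟨((1, m) : NW X Y),
      isLead_map_fwd embY_inj (fun u v => lexNW_embY_iff degLex_irrefl_one u v) hlead, ?_⟩
    have hprod : ((wx, a i) : NW X Y) * (1, m) * (1, b i) = ((wx, a i * m * b i) : NW X Y) := by
      simp [Prod.ext_iff, Prod.fst_mul, Prod.snd_mul]
    rw [hprod]
    exact Or.inr ⟨rfl, hlt⟩

end Transfer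

theorem comp_shape {k X Y : Type*} [Ring k] {f g : MonoidAlgebra k (NW X Y)}
    {mf mg : NW X Y} {p : MonoidAlgebra k (NW X Y)} {w : NW X Y}
    (h : IsComp f g mf mg p w) :
    ∃ A₁ B₁ A₂ B₂ : NW X Y,
      p = mono k A₁ * f * mono k B₁ - mono k A₂ * g * mono k B₂ ∧
      A₁ * mf * B₁ = w ∧ A₂ * mg * B₂ = w := by
  obtain ⟨fx, fy⟩ := mf
  obtain ⟨gx, gy⟩ := mg
  simp only [IsComp] at h
  rcases h with ⟨a,b,c,hfx,(⟨hw,hp⟩|⟨hw,hp⟩)⟩ | ⟨a,c,d,hfy,(⟨hw,hp⟩|⟨hw,hp⟩)⟩ |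
    ⟨a,b,c,d,hfx,hfy,hw,hp⟩ | ⟨a,b,c,d,hfx,hgy,hw,hp⟩ |
    ⟨a,b,c,hfx,hl,(⟨hw,hp⟩|⟨hw,hp⟩)⟩ | ⟨a,c,d,hfy,hl,(⟨hw,hp⟩|⟨hw,hp⟩)⟩ |
    ⟨a,b,c,d,h1,h2,h3,h4,hw,hp⟩ | ⟨a,b,c,d,h1,h2,h3,h4,hw,hp⟩ |
    ⟨a,b,c,d,hfx,(⟨h1,h2,hw,hp⟩|⟨h1,h2,hw,hp⟩)⟩ |
    ⟨a,b,c,d,h1,h2,(⟨h3,hw,hp⟩|⟨h3,hw,hp⟩)⟩ <;>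
  subst hw <;> subst hp
  -- 1.1 (i)
  · exact ⟨1, (1, c * gy), (a, fy * c), (b, 1),
      by rw [mono_one, one_mul],
      by simp [Prod.ext_iff, one_mul, mul_one, mul_assoc, hfx],
      by simp [Prod.ext_iff, one_mul, mul_one, mul_assoc, hfx]⟩
  -- 1.1 (ii)
  · exact ⟨(1, gy * c), 1, (a, 1), (b, c * fy),
      by rw [mono_one, mul_one],
      by simp [Prod.ext_iff, one_mul, mul_one, mul_assoc, hfx],
      by simp [Prod.ext_iff, one_mul, mul_one, mul_assoc, hfx]⟩
  -- 1.2 (i)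
  · exact ⟨1, (a * gx, 1), (fx * a, c), (1, d),
      by rw [mono_one, one_mul],
      by simp [Prod.ext_iff, one_mul, mul_one, mul_assoc, hfy],
      by simp [Prod.ext_iff, one_mul, mul_one, mul_assoc, hfy]⟩
  -- 1.2 (ii)
  · exact ⟨(gx * a, 1), 1, (1, c), (a * fx, d),
      by rw [mono_one, mul_one],
      by simp [Prod.ext_iff, one_mul, mul_one, mul_assoc, hfy],
      by simp [Prod.ext_iff, one_mul, mul_one, mul_assoc, hfy]⟩
  -- 1.3
  · exact ⟨1, 1, (a, c), (b, d),
      by rw [mono_one, one_mul, mul_one],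
      by simp [Prod.ext_iff, one_mul, mul_one, mul_assoc, hfx, hfy],
      by simp [Prod.ext_iff, one_mul, mul_one, mul_assoc, hfx, hfy]⟩
  -- 1.4
  · exact ⟨(1, c), (1, d), (a, 1), (b, 1),
      rfl,
      by simp [Prod.ext_iff, one_mul, mul_one, mul_assoc, hfx, hgy],
      by simp [Prod.ext_iff, one_mul, mul_one, mul_assoc, hfx, hgy]⟩
  -- 2.1 (i)
  · exact ⟨1, (a, c * gy), (b, fy * c), 1,
      by rw [mono_one, one_mul, mul_one],
      by simp [Prod.ext_iff, one_mul, mul_one, mul_assoc],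
      by simp [Prod.ext_iff, one_mul, mul_one, mul_assoc, ← hfx]⟩
  -- 2.1 (ii)
  · exact ⟨(1, gy * c), (a, 1), (b, 1), (1, c * fy),
      rfl,
      by simp [Prod.ext_iff, one_mul, mul_one, mul_assoc],
      by simp [Prod.ext_iff, one_mul, mul_one, mul_assoc, ← hfx]⟩
  -- 2.2 (i)
  · exact ⟨1, (a * gx, c), (fx * a, d), 1,
      by rw [mono_one, one_mul, mul_one],
      by simp [Prod.ext_iff, one_mul, mul_one, mul_assoc],
      by simp [Prod.ext_iff, one_mul, mul_one, mul_assoc, ← hfy]⟩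
  -- 2.2 (ii)
  · exact ⟨(gx * a, 1), (1, c), (1, d), (a * fx, 1),
      rfl,
      by simp [Prod.ext_iff, one_mul, mul_one, mul_assoc],
      by simp [Prod.ext_iff, one_mul, mul_one, mul_assoc, ← hfy]⟩
  -- 2.3
  · exact ⟨1, (a, c), (b, d), 1,
      by rw [mono_one, one_mul, mul_one],
      by simp [Prod.ext_iff, one_mul, mul_one, mul_assoc],
      by simp [Prod.ext_iff, one_mul, mul_one, mul_assoc, ← h1, ← h2]⟩
  -- 2.4
  · exact ⟨(1, c), (a, 1), (b, 1), (1, d),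
      rfl,
      by simp [Prod.ext_iff, one_mul, mul_one, mul_assoc],
      by simp [Prod.ext_iff, one_mul, mul_one, mul_assoc, ← h1, ← h2]⟩
  -- 3.1 (i)
  · exact ⟨1, (1, c), (a, d), (b, 1),
      by rw [mono_one, one_mul],
      by simp [Prod.ext_iff, one_mul, mul_one, mul_assoc],
      by simp [Prod.ext_iff, one_mul, mul_one, mul_assoc, hfx, ← h1]⟩
  -- 3.1 (ii)
  · exact ⟨(1, c), 1, (a, 1), (b, d),
      by rw [mono_one, mul_one],
      by simp [Prod.ext_iff, one_mul, mul_one, mul_assoc],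
      by simp [Prod.ext_iff, one_mul, mul_one, mul_assoc, hfx, ← h1]⟩
  -- 3.2 (i)
  · exact ⟨1, (a, 1), (b, c), (1, d),
      by rw [mono_one, one_mul],
      by simp [Prod.ext_iff, one_mul, mul_one, mul_assoc, h3],
      by simp [Prod.ext_iff, one_mul, mul_one, mul_assoc, h3, ← h1]⟩
  -- 3.2 (ii)
  · exact ⟨(1, c), (a, d), (b, 1), 1,
      by rw [mono_one, mul_one],
      by simp [Prod.ext_iff, one_mul, mul_one, mul_assoc, h3],
      by simp [Prod.ext_iff, one_mul, mul_one, mul_assoc, h3, ← h1]⟩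


section CaseLemmas

noncomputable def phiX (k : Type*) (X Y : Type*) [Semiring k]
    (f : MonoidAlgebra k (FreeMonoid X)) : MonoidAlgebra k (NW X Y) :=
  MonoidAlgebra.mapDomain (fun u : FreeMonoid X => ((u, 1) : NW X Y)) f

noncomputable def phiY (k : Type*) (X Y : Type*) [Semiring k]
    (f : MonoidAlgebra k (FreeMonoid Y)) : MonoidAlgebra k (NW X Y) :=
  MonoidAlgebra.mapDomain (fun v : FreeMonoid Y => ((1, v) : NW X Y)) f

variable {k X Y : Type*} [CommRing k] [LinearOrder X] [LinearOrder Y]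

local notation "LL" => lexNW (degLex ((· < ·) : X → X → Prop)) (degLex ((· < ·) : Y → Y → Prop))

theorem liftXX {S₁ : Set (MonoidAlgebra k (FreeMonoid X))}
    {T : Set (MonoidAlgebra k (NW X Y))} (hsub : ∀ p ∈ S₁, phiX k X Y p ∈ T)
    (A₁ B₁ A₂ B₂ w : NW X Y) (f₁ g₁ : MonoidAlgebra k (FreeMonoid X))
    (e2 : A₁.2 * B₁.2 = w.2) (e4 : A₂.2 * B₂.2 = w.2)
    (h : TrivModR (degLex (· < ·)) S₁ w.1
      (mono k A₁.1 * f₁ * mono k B₁.1 - mono k A₂.1 * g₁ * mono k B₂.1)) :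
    TrivModR LL T w
      (mono k A₁ * phiX k X Y f₁ * mono k B₁ - mono k A₂ * phiX k X Y g₁ * mono k B₂) := by
  have hlift := liftTrivX (T := T) (fun p hp => hsub p hp) w.1 w.2 h
  rw [Prod.mk.eta] at hlift
  have hpeq : MonoidAlgebra.mapDomain (fun u : FreeMonoid X => ((u, w.2) : NW X Y))
      (mono k A₁.1 * f₁ * mono k B₁.1 - mono k A₂.1 * g₁ * mono k B₂.1)
      = mono k A₁ * phiX k X Y f₁ * mono k B₁ - mono k A₂ * phiX k X Y g₁ * mono k B₂ := by
    simp only [phiX]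
    rw [mapDomain_sub, mapDomain_conj, mapDomain_conj,
      conj_map (fun u : FreeMonoid X => ((u, 1) : NW X Y)) A₁ B₁ f₁ rfl,
      conj_map (fun u : FreeMonoid X => ((u, 1) : NW X Y)) A₂ B₂ g₁ rfl]
    congr 1 <;> refine maD_congr fun x _ => ?_ <;>
      simp [Prod.ext_iff, Prod.fst_mul, Prod.snd_mul, one_mul, mul_one, e2, e4]
  rwa [hpeq] at hlift

theorem liftYY {S₂ : Set (MonoidAlgebra k (FreeMonoid Y))}
    {T : Set (MonoidAlgebra k (NW X Y))} (hsub : ∀ p ∈ S₂, phiY k X Y p ∈ T)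
    (A₁ B₁ A₂ B₂ w : NW X Y) (f₂ g₂ : MonoidAlgebra k (FreeMonoid Y))
    (e1 : A₁.1 * B₁.1 = w.1) (e3 : A₂.1 * B₂.1 = w.1)
    (h : TrivModR (degLex (· < ·)) S₂ w.2
      (mono k A₁.2 * f₂ * mono k B₁.2 - mono k A₂.2 * g₂ * mono k B₂.2)) :
    TrivModR LL T w
      (mono k A₁ * phiY k X Y f₂ * mono k B₁ - mono k A₂ * phiY k X Y g₂ * mono k B₂) := by
  have hlift := liftTrivY (T := T) (fun p hp => hsub p hp) w.1 w.2 h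
  rw [Prod.mk.eta] at hlift
  have hpeq : MonoidAlgebra.mapDomain (fun v : FreeMonoid Y => ((w.1, v) : NW X Y))
      (mono k A₁.2 * f₂ * mono k B₁.2 - mono k A₂.2 * g₂ * mono k B₂.2)
      = mono k A₁ * phiY k X Y f₂ * mono k B₁ - mono k A₂ * phiY k X Y g₂ * mono k B₂ := by
    simp only [phiY]
    rw [mapDomain_sub, mapDomain_conj, mapDomain_conj,
      conj_map (fun v : FreeMonoid Y => ((1, v) : NW X Y)) A₁ B₁ f₂ rfl,
      conj_map (fun v : FreeMonoid Y => ((1, v) : NW X Y)) A₂ B₂ g₂ rfl]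
    congr 1 <;> refine maD_congr fun x _ => ?_ <;>
      simp [Prod.ext_iff, Prod.fst_mul, Prod.snd_mul, one_mul, mul_one, e1, e3]
  rwa [hpeq] at hlift

theorem mixedXY {T : Set (MonoidAlgebra k (NW X Y))}
    (f₁ : MonoidAlgebra k (FreeMonoid X)) (g₂ : MonoidAlgebra k (FreeMonoid Y))
    (hf : phiX k X Y f₁ ∈ T) (hg : phiY k X Y g₂ ∈ T)
    {m₁ : FreeMonoid X} {n₂ : FreeMonoid Y} (A₁ B₁ A₂ B₂ w : NW X Y)
    (hmf : IsLeadR LL (phiX k X Y f₁) ((m₁, 1) : NW X Y))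
    (hmg : IsLeadR LL (phiY k X Y g₂) ((1, n₂) : NW X Y))
    (hcf : (phiX k X Y f₁).coeff ((m₁, 1) : NW X Y) = 1)
    (hcg : (phiY k X Y g₂).coeff ((1, n₂) : NW X Y) = 1)
    (e1 : A₁.1 * m₁ * B₁.1 = w.1) (e2 : A₁.2 * B₁.2 = w.2)
    (e3 : A₂.1 * B₂.1 = w.1) (e4 : A₂.2 * n₂ * B₂.2 = w.2) :
    TrivModR LL T w
      (mono k A₁ * phiX k X Y f₁ * mono k B₁ - mono k A₂ * phiY k X Y g₂ * mono k B₂) := by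
  have hcompat := lexNW_compat (degLex ((· < ·) : X → X → Prop))
    (degLex ((· < ·) : Y → Y → Prop)) (degLex_compat _) (degLex_compat _)
  have E1 : A₁.1 * (m₁ * B₁.1) = w.1 := by rw [← mul_assoc]; exact e1
  have E4 : A₂.2 * (n₂ * B₂.2) = w.2 := by rw [← mul_assoc]; exact e4
  have htriv := t2abs hcompat hf hg hmf hmg hcf hcg
    ((A₁.1, A₂.2) : NW X Y) ((B₁.1, 1) : NW X Y) ((1, B₂.2) : NW X Y)
  have hword : ((A₁.1, A₂.2) : NW X Y) * (m₁, 1) * (B₁.1, 1) * (1, n₂) * (1, B₂.2) = w := by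
    apply Prod.ext <;>
      simp [Prod.fst_mul, Prod.snd_mul, one_mul, mul_one, mul_assoc, e1, e2, e3, e4, E1, E4]
  have hpoly : mono k ((A₁.1, A₂.2) : NW X Y) * phiX k X Y f₁
        * mono k (((B₁.1, 1) : NW X Y) * (1, n₂) * (1, B₂.2))
      - mono k (((A₁.1, A₂.2) : NW X Y) * (m₁, 1) * (B₁.1, 1)) * phiY k X Y g₂
        * mono k ((1, B₂.2) : NW X Y)
      = mono k A₁ * phiX k X Y f₁ * mono k B₁ - mono k A₂ * phiY k X Y g₂ * mono k B₂ := by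
    simp only [phiX, phiY]
    rw [conj_map (fun u : FreeMonoid X => ((u, 1) : NW X Y)) A₁ B₁ f₁ rfl,
      conj_map (fun v : FreeMonoid Y => ((1, v) : NW X Y)) A₂ B₂ g₂ rfl,
      conj_map (fun u : FreeMonoid X => ((u, 1) : NW X Y)) _ _ f₁ rfl,
      conj_map (fun v : FreeMonoid Y => ((1, v) : NW X Y)) _ _ g₂ rfl]
    congr 1 <;> refine maD_congr fun x _ => ?_ <;>
      simp [Prod.ext_iff, Prod.fst_mul, Prod.snd_mul, one_mul, mul_one, mul_assoc,
        e1, e2, e3, e4, E1, E4]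
  rw [hword, hpoly] at htriv
  exact htriv

theorem mixedYX {T : Set (MonoidAlgebra k (NW X Y))}
    (f₂ : MonoidAlgebra k (FreeMonoid Y)) (g₁ : MonoidAlgebra k (FreeMonoid X))
    (hf : phiY k X Y f₂ ∈ T) (hg : phiX k X Y g₁ ∈ T)
    {m₂ : FreeMonoid Y} {n₁ : FreeMonoid X} (A₁ B₁ A₂ B₂ w : NW X Y)
    (hmf : IsLeadR LL (phiY k X Y f₂) ((1, m₂) : NW X Y))
    (hmg : IsLeadR LL (phiX k X Y g₁) ((n₁, 1) : NW X Y))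
    (hcf : (phiY k X Y f₂).coeff ((1, m₂) : NW X Y) = 1)
    (hcg : (phiX k X Y g₁).coeff ((n₁, 1) : NW X Y) = 1)
    (e1 : A₁.1 * B₁.1 = w.1) (e2 : A₁.2 * m₂ * B₁.2 = w.2)
    (e3 : A₂.1 * n₁ * B₂.1 = w.1) (e4 : A₂.2 * B₂.2 = w.2) :
    TrivModR LL T w
      (mono k A₁ * phiY k X Y f₂ * mono k B₁ - mono k A₂ * phiX k X Y g₁ * mono k B₂) := by
  have hcompat := lexNW_compat (degLex ((· < ·) : X → X → Prop))
    (degLex ((· < ·) : Y → Y → Prop)) (degLex_compat _) (degLex_compat _)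
  have E2 : A₁.2 * (m₂ * B₁.2) = w.2 := by rw [← mul_assoc]; exact e2
  have E3 : A₂.1 * (n₁ * B₂.1) = w.1 := by rw [← mul_assoc]; exact e3
  have htriv := t2abs hcompat hf hg hmf hmg hcf hcg
    ((A₂.1, A₁.2) : NW X Y) (1 : NW X Y) ((B₂.1, B₁.2) : NW X Y)
  have hword : ((A₂.1, A₁.2) : NW X Y) * (1, m₂) * 1 * (n₁, 1) * (B₂.1, B₁.2) = w := by
    apply Prod.ext <;>
      simp [Prod.fst_mul, Prod.snd_mul, Prod.fst_one, Prod.snd_one, one_mul, mul_one,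
        mul_assoc, e1, e2, e3, e4, E2, E3]
  have hpoly : mono k ((A₂.1, A₁.2) : NW X Y) * phiY k X Y f₂
        * mono k ((1 : NW X Y) * (n₁, 1) * (B₂.1, B₁.2))
      - mono k (((A₂.1, A₁.2) : NW X Y) * (1, m₂) * 1) * phiX k X Y g₁
        * mono k ((B₂.1, B₁.2) : NW X Y)
      = mono k A₁ * phiY k X Y f₂ * mono k B₁ - mono k A₂ * phiX k X Y g₁ * mono k B₂ := by
    simp only [phiX, phiY]
    rw [conj_map (fun v : FreeMonoid Y => ((1, v) : NW X Y)) A₁ B₁ f₂ rfl,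
      conj_map (fun u : FreeMonoid X => ((u, 1) : NW X Y)) A₂ B₂ g₁ rfl,
      conj_map (fun v : FreeMonoid Y => ((1, v) : NW X Y)) _ _ f₂ rfl,
      conj_map (fun u : FreeMonoid X => ((u, 1) : NW X Y)) _ _ g₁ rfl]
    congr 1 <;> refine maD_congr fun x _ => ?_ <;>
      simp [Prod.ext_iff, Prod.fst_mul, Prod.snd_mul, Prod.fst_one, Prod.snd_one,
        one_mul, mul_one, mul_assoc, e1, e2, e3, e4, E2, E3]
  rw [hword, hpoly] at htriv
  exact htriv

end CaseLemmas

/-- if `S₁` is a Gröbner–Shirshov basis in `k⟨X⟩` and `S₂` is a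
Gröbner–Shirshov basis in `k⟨Y⟩` (for deg-lex orders), then `S₁ ∪ S₂` is a
Gröbner–Shirshov basis in `k⟨X⟩ ⊗ k⟨Y⟩` for the induced deg-lex order on `X*Y*`. -/
theorem stmt_8 {k X Y : Type*} [Field k] [LinearOrder X] [LinearOrder Y]
    (S₁ : Set (MonoidAlgebra k (FreeMonoid X))) (S₂ : Set (MonoidAlgebra k (FreeMonoid Y)))
    (h₁ : FIsGSB (degLex ((· < ·) : X → X → Prop)) S₁)
    (h₂ : FIsGSB (degLex ((· < ·) : Y → Y → Prop)) S₂) :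
    IsGSB (lexNW (degLex ((· < ·) : X → X → Prop)) (degLex ((· < ·) : Y → Y → Prop)))
      ((MonoidAlgebra.mapDomain (fun u : FreeMonoid X => ((u, 1) : NW X Y)) '' S₁) ∪
       (MonoidAlgebra.mapDomain (fun v : FreeMonoid Y => ((1, v) : NW X Y)) '' S₂)) := by
  classical
  set T : Set (MonoidAlgebra k (NW X Y)) :=
    ((MonoidAlgebra.mapDomain (fun u : FreeMonoid X => ((u, 1) : NW X Y)) '' S₁) ∪
     (MonoidAlgebra.mapDomain (fun v : FreeMonoid Y => ((1, v) : NW X Y)) '' S₂)) with hT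
  have hordX : ∀ u v : FreeMonoid X,
      lexNW (degLex ((· < ·) : X → X → Prop)) (degLex ((· < ·) : Y → Y → Prop))
        ((u, 1) : NW X Y) (v, 1) ↔ degLex (· < ·) u v :=
    fun u v => lexNW_embX_iff degLex_irrefl_one u v
  have hordY : ∀ u v : FreeMonoid Y,
      lexNW (degLex ((· < ·) : X → X → Prop)) (degLex ((· < ·) : Y → Y → Prop))
        ((1, u) : NW X Y) (1, v) ↔ degLex (· < ·) u v :=
    fun u v => lexNW_embY_iff degLex_irrefl_one u v
  have hsubX : ∀ p ∈ S₁, phiX k X Y p ∈ T :=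
    fun p hp => Set.mem_union_left _ (Set.mem_image_of_mem _ hp)
  have hsubY : ∀ p ∈ S₂, phiY k X Y p ∈ T :=
    fun p hp => Set.mem_union_right _ (Set.mem_image_of_mem _ hp)
  have hasymX : ∀ u v : FreeMonoid X, degLex (· < ·) u v → degLex (· < ·) v u → False :=
    fun u v h h' => degLex_asymm h h'
  have hasymY : ∀ u v : FreeMonoid Y, degLex (· < ·) u v → degLex (· < ·) v u → False :=
    fun u v h h' => degLex_asymm h h'
  constructor
  · rintro s hs
    rcases hs with ⟨s₁, hs₁, rfl⟩ | ⟨s₂, hs₂, rfl⟩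
    · obtain ⟨m, hm, h1c⟩ := h₁.1 s₁ hs₁
      exact ⟨((m, 1) : NW X Y), isLead_map_fwd embX_inj hordX hm,
        by rw [maD_apply embX_inj]; exact h1c⟩
    · obtain ⟨m, hm, h1c⟩ := h₂.1 s₂ hs₂
      exact ⟨((1, m) : NW X Y), isLead_map_fwd embY_inj hordY hm,
        by rw [maD_apply embY_inj]; exact h1c⟩
  · rintro f hf g hg mf mg p w hmf hmg hcomp
    obtain ⟨A₁, B₁, A₂, B₂, hp, hw1, hw2⟩ := comp_shape hcomp
    rcases hf with ⟨f₁, hf₁, rfl⟩ | ⟨f₂, hf₂, rfl⟩ <;>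
      rcases hg with ⟨g₁, hg₁, rfl⟩ | ⟨g₂, hg₂, rfl⟩
    · -- X-X case
      obtain ⟨m₁, rfl, hm₁⟩ := isLead_map_bwd embX_inj hordX hmf
      obtain ⟨n₁, rfl, hn₁⟩ := isLead_map_bwd embX_inj hordX hmg
      have e1 : A₁.1 * m₁ * B₁.1 = w.1 := by rw [← hw1]; simp [Prod.fst_mul]
      have e2 : A₁.2 * B₁.2 = w.2 := by rw [← hw1]; simp [Prod.snd_mul]
      have e3 : A₂.1 * n₁ * B₂.1 = w.1 := by rw [← hw2]; simp [Prod.fst_mul]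
      have e4 : A₂.2 * B₂.2 = w.2 := by rw [← hw2]; simp [Prod.snd_mul]
      have hq := keyF h₁ hf₁ hg₁ hm₁ hn₁ A₁.1 B₁.1 A₂.1 B₂.1 (e1.trans e3.symm)
      rw [e1] at hq
      rw [hp]
      exact liftXX hsubX A₁ B₁ A₂ B₂ w f₁ g₁ e2 e4 hq
    · -- X-Y case
      obtain ⟨m₁, rfl, hm₁⟩ := isLead_map_bwd embX_inj hordX hmf
      obtain ⟨n₂, rfl, hn₂⟩ := isLead_map_bwd embY_inj hordY hmg
      have e1 : A₁.1 * m₁ * B₁.1 = w.1 := by rw [← hw1]; simp [Prod.fst_mul]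
      have e2 : A₁.2 * B₁.2 = w.2 := by rw [← hw1]; simp [Prod.snd_mul]
      have e3 : A₂.1 * B₂.1 = w.1 := by rw [← hw2]; simp [Prod.fst_mul]
      have e4 : A₂.2 * n₂ * B₂.2 = w.2 := by rw [← hw2]; simp [Prod.snd_mul]
      obtain ⟨m0, hm0, hc0⟩ := h₁.1 f₁ hf₁
      have hcf : f₁.coeff m₁ = 1 := by rw [lead_unique hasymX hm₁ hm0]; exact hc0
      obtain ⟨n0, hn0, hc0'⟩ := h₂.1 g₂ hg₂
      have hcg : g₂.coeff n₂ = 1 := by rw [lead_unique hasymY hn₂ hn0]; exact hc0'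
      have hcf' : (phiX k X Y f₁).coeff ((m₁, 1) : NW X Y) = 1 := by
        rw [phiX, maD_apply embX_inj]; exact hcf
      have hcg' : (phiY k X Y g₂).coeff ((1, n₂) : NW X Y) = 1 := by
        rw [phiY, maD_apply embY_inj]; exact hcg
      rw [hp]
      exact mixedXY f₁ g₂ (hsubX f₁ hf₁) (hsubY g₂ hg₂) A₁ B₁ A₂ B₂ w
        hmf hmg hcf' hcg' e1 e2 e3 e4
    · -- Y-X case
      obtain ⟨m₂, rfl, hm₂⟩ := isLead_map_bwd embY_inj hordY hmf
      obtain ⟨n₁, rfl, hn₁⟩ := isLead_map_bwd embX_inj hordX hmg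
      have e1 : A₁.1 * B₁.1 = w.1 := by rw [← hw1]; simp [Prod.fst_mul]
      have e2 : A₁.2 * m₂ * B₁.2 = w.2 := by rw [← hw1]; simp [Prod.snd_mul]
      have e3 : A₂.1 * n₁ * B₂.1 = w.1 := by rw [← hw2]; simp [Prod.fst_mul]
      have e4 : A₂.2 * B₂.2 = w.2 := by rw [← hw2]; simp [Prod.snd_mul]
      obtain ⟨m0, hm0, hc0⟩ := h₂.1 f₂ hf₂
      have hcf : f₂.coeff m₂ = 1 := by rw [lead_unique hasymY hm₂ hm0]; exact hc0
      obtain ⟨n0, hn0, hc0'⟩ := h₁.1 g₁ hg₁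
      have hcg : g₁.coeff n₁ = 1 := by rw [lead_unique hasymX hn₁ hn0]; exact hc0'
      have hcf' : (phiY k X Y f₂).coeff ((1, m₂) : NW X Y) = 1 := by
        rw [phiY, maD_apply embY_inj]; exact hcf
      have hcg' : (phiX k X Y g₁).coeff ((n₁, 1) : NW X Y) = 1 := by
        rw [phiX, maD_apply embX_inj]; exact hcg
      rw [hp]
      exact mixedYX f₂ g₁ (hsubY f₂ hf₂) (hsubX g₁ hg₁) A₁ B₁ A₂ B₂ w
        hmf hmg hcf' hcg' e1 e2 e3 e4
    · -- Y-Y case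
      obtain ⟨m₂, rfl, hm₂⟩ := isLead_map_bwd embY_inj hordY hmf
      obtain ⟨n₂, rfl, hn₂⟩ := isLead_map_bwd embY_inj hordY hmg
      have e1 : A₁.1 * B₁.1 = w.1 := by rw [← hw1]; simp [Prod.fst_mul]
      have e2 : A₁.2 * m₂ * B₁.2 = w.2 := by rw [← hw1]; simp [Prod.snd_mul]
      have e3 : A₂.1 * B₂.1 = w.1 := by rw [← hw2]; simp [Prod.fst_mul]
      have e4 : A₂.2 * n₂ * B₂.2 = w.2 := by rw [← hw2]; simp [Prod.snd_mul]
      have hq := keyF h₂ hf₂ hg₂ hm₂ hn₂ A₁.2 B₁.2 A₂.2 B₂.2 (e2.trans e4.symm)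
      rw [e2] at hq
      rw [hp]
      exact liftYY hsubY A₁ B₁ A₂ B₂ w f₂ g₂ e1 e3 hq
end

section
/- The set S = {xᵢxⱼ - xⱼxᵢ : xᵢ > xⱼ, xᵢ, xⱼ ∈ X} is a Gröbner–Shirshov basis in k⟨X⟩ ⊗ k⟨Y⟩ with respect to the deg-lex order on X*Y*, and consequently k[X] ⊗ k⟨Y⟩ ≅ k⟨X ∪ Y | T ∪ S⟩ where T = {yx - xy : x ∈ X, y ∈ Y}. -/
/-- the relations `T = {yx - xy}` in the free algebra `k⟨X ∪ Y⟩`. -/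
noncomputable def Tset (k X Y : Type*) [Ring k] :
    Set (MonoidAlgebra k (FreeMonoid (X ⊕ Y))) :=
  {p | ∃ (x : X) (y : Y),
    p = mono k (FreeMonoid.of (Sum.inr y) * FreeMonoid.of (Sum.inl x)) -
        mono k (FreeMonoid.of (Sum.inl x) * FreeMonoid.of (Sum.inr y))}

/-- the relation identifying each element of `S` with `0`. -/
def relOf {A : Type*} [Ring A] (S : Set A) (a b : A) : Prop := a ∈ S ∧ b = 0


/- ======== auxiliary development ======== -/

set_option linter.unusedSectionVars false
section P1
variable {k X Y : Type*} [Field k] [LinearOrder X] [LinearOrder Y]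

abbrev ltN (X Y : Type*) [LinearOrder X] [LinearOrder Y] : NW X Y → NW X Y → Prop :=
  lexNW (degLex ((· < ·) : X → X → Prop)) (degLex ((· < ·) : Y → Y → Prop))

noncomputable abbrev Scomm (k X Y : Type*) [Field k] [LinearOrder X] [LinearOrder Y] :
    Set (MonoidAlgebra k (NW X Y)) :=
  {p : MonoidAlgebra k (NW X Y) | ∃ i j : X, j < i ∧
        p = mono k ((FreeMonoid.of i * FreeMonoid.of j, 1) : NW X Y) -
            mono k ((FreeMonoid.of j * FreeMonoid.of i, 1) : NW X Y)}

lemma degLex_trans {A : Type*} [LinearOrder A] :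
    Transitive (degLex ((· < ·) : A → A → Prop)) := by
  rintro u v t (h | ⟨h1, h2⟩) (h' | ⟨h1', h2'⟩)
  · exact Or.inl (h.trans h')
  · exact Or.inl (h1' ▸ h)
  · exact Or.inl (h1 ▸ h')
  · exact Or.inr ⟨h1.trans h1', List.lex_trans lt_trans h2 h2'⟩

lemma degLex_irrefl {A : Type*} [LinearOrder A] (u : FreeMonoid A) :
    ¬ degLex ((· < ·) : A → A → Prop) u u := by
  rintro (h | ⟨-, h⟩)
  · exact lt_irrefl _ h
  · exact (inferInstance : IsIrrefl (List A) (List.Lex (·<·))).irrefl _ h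

lemma ltN_trans : Transitive (ltN X Y) := by
  rintro u v t (h | ⟨h1, h2⟩) (h' | ⟨h1', h2'⟩)
  · exact Or.inl (degLex_trans h h')
  · exact Or.inl (h1' ▸ h)
  · exact Or.inl (h1 ▸ h')
  · exact Or.inr ⟨h1.trans h1', degLex_trans h2 h2'⟩

lemma ltN_irrefl (u : NW X Y) : ¬ ltN X Y u u := by
  rintro (h | ⟨-, h⟩)
  · exact degLex_irrefl _ h
  · exact degLex_irrefl _ h

lemma ltN_asymm {u v : NW X Y} (h : ltN X Y u v) (h' : ltN X Y v u) : False :=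
  ltN_irrefl u (ltN_trans h h')

lemma lead_unique_s10 {f : MonoidAlgebra k (NW X Y)} {m m' : NW X Y}
    (h : IsLeadR (ltN X Y) f m) (h' : IsLeadR (ltN X Y) f m') : m = m' := by
  by_contra hne
  exact ltN_asymm (h'.2 m h.1 hne) (h.2 m' h'.1 (Ne.symm hne))

lemma mono_def (m : NW X Y) : mono k m = MonoidAlgebra.single m 1 := rfl

/-- the element x_i x_j - x_j x_i -/
noncomputable def sElt (k : Type*) [Field k] {X : Type*} [LinearOrder X] (Y : Type*)
    [LinearOrder Y] (i j : X) : MonoidAlgebra k (NW X Y) :=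
  mono k ((FreeMonoid.of i * FreeMonoid.of j, 1) : NW X Y) -
    mono k ((FreeMonoid.of j * FreeMonoid.of i, 1) : NW X Y)

lemma sElt_mem {i j : X} (hij : j < i) : sElt k Y i j ∈ Scomm k X Y := ⟨i, j, hij, rfl⟩

lemma of_mul_ne {i j : X} (hij : j < i) :
    ((FreeMonoid.of i * FreeMonoid.of j, 1) : NW X Y) ≠ (FreeMonoid.of j * FreeMonoid.of i, 1) := by
  intro h
  have := congrArg (fun p => (FreeMonoid.toList p.1)) h
  simp at this
  exact absurd this.1 (ne_of_gt hij)

lemma sElt_apply₁ {i j : X} (hij : j < i) :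
    (sElt k Y i j).coeff ((FreeMonoid.of i * FreeMonoid.of j, 1) : NW X Y) = 1 := by
  rw [sElt, mono_def, mono_def]
  rw [MonoidAlgebra.coeff_sub, MonoidAlgebra.coeff_single, MonoidAlgebra.coeff_single,
    Finsupp.sub_apply, Finsupp.single_eq_same, Finsupp.single_eq_of_ne' (Ne.symm (of_mul_ne hij)),
    sub_zero]

lemma sElt_support {i j : X} (hij : j < i) (u : NW X Y) :
    u ∈ (sElt k Y i j).coeff.support ↔ (u = ((FreeMonoid.of i * FreeMonoid.of j, 1) : NW X Y) ∨
      u = (FreeMonoid.of j * FreeMonoid.of i, 1)) := by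
  simp only [Finsupp.mem_support_iff]
  rw [sElt, mono_def, mono_def, MonoidAlgebra.coeff_sub, MonoidAlgebra.coeff_single,
    MonoidAlgebra.coeff_single, Finsupp.sub_apply]
  rcases eq_or_ne u ((FreeMonoid.of i * FreeMonoid.of j, 1) : NW X Y) with rfl | h1
  · simp [Finsupp.single_eq_of_ne' (Ne.symm (of_mul_ne hij))]
  rcases eq_or_ne u ((FreeMonoid.of j * FreeMonoid.of i, 1) : NW X Y) with rfl | h2
  · simp [Finsupp.single_eq_of_ne' (of_mul_ne hij), h1]
  · simp [Finsupp.single_eq_of_ne' (Ne.symm h1), Finsupp.single_eq_of_ne' (Ne.symm h2), h1, h2]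

lemma ltN_of_lex {u v : FreeMonoid X} (y : FreeMonoid Y) (h1 : u.toList.Perm v.toList)
    (h2 : List.Lex (· < ·) u.toList v.toList) : ltN X Y (u, y) (v, y) :=
  Or.inl (Or.inr ⟨h1.length_eq, h2⟩)

lemma sElt_lead {i j : X} (hij : j < i) :
    IsLeadR (ltN X Y) (sElt k Y i j) ((FreeMonoid.of i * FreeMonoid.of j, 1) : NW X Y) := by
  constructor
  · rw [sElt_support hij]; exact Or.inl rfl
  · intro u hu hne
    rw [sElt_support hij] at hu
    rcases hu with rfl | rfl
    · exact absurd rfl hne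
    · refine ltN_of_lex _ ?_ ?_
      · simp only [FreeMonoid.toList_mul, FreeMonoid.toList_of]
        exact List.Perm.swap _ _ _
      · simp only [FreeMonoid.toList_mul, FreeMonoid.toList_of, List.singleton_append]
        exact List.Lex.rel hij

lemma sElt_monic {i j : X} (hij : j < i) : MonicR (ltN X Y) (sElt k Y i j) :=
  ⟨_, sElt_lead hij, sElt_apply₁ hij⟩

/-- A representation of `h` as a combination of commutators with all lead words
bounded (lex, same multiset) by the word `W`, with common `Y`-part `y`. -/
def CRep (k : Type*) [Field k] {X Y : Type*} [LinearOrder X] [LinearOrder Y]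
    (W : List X) (y : FreeMonoid Y) (h : MonoidAlgebra k (NW X Y)) : Prop :=
  ∃ (n : ℕ) (α : Fin n → k) (a b : Fin n → NW X Y)
    (s : Fin n → MonoidAlgebra k (NW X Y)),
    (∀ i, s i ∈ Scomm k X Y) ∧
    h = ∑ i, α i • (mono k (a i) * s i * mono k (b i)) ∧
    ∀ i, ∃ m w', IsLeadR (ltN X Y) (s i) m ∧
      a i * m * b i = ((FreeMonoid.ofList w', y) : NW X Y) ∧
      w'.Perm W ∧ (w' = W ∨ List.Lex (· < ·) w' W)

lemma rep_zero (W : List X) (y : FreeMonoid Y) : CRep k W y 0 :=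
  ⟨0, ![], ![], ![], ![], fun i => i.elim0, by simp, fun i => i.elim0⟩

lemma rep_add {W : List X} {y : FreeMonoid Y} {h h' : MonoidAlgebra k (NW X Y)}
    (H : CRep k W y h) (H' : CRep k W y h') : CRep k W y (h + h') := by
  obtain ⟨n, α, a, b, s, hs, he, hl⟩ := H
  obtain ⟨n', α', a', b', s', hs', he', hl'⟩ := H'
  refine ⟨n + n', Fin.append α α', Fin.append a a', Fin.append b b', Fin.append s s',
    ?_, ?_, ?_⟩
  · intro i
    rcases Nat.lt_or_ge i.val n with h | h
    · have : i = Fin.castAdd n' ⟨i, h⟩ := by simp [Fin.castAdd]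
      rw [this, Fin.append_left]; exact hs _
    · obtain ⟨j, rfl⟩ : ∃ j : Fin n', i = Fin.natAdd n j :=
        ⟨⟨i.val - n, by omega⟩, by rw [Fin.ext_iff]; simp [Fin.natAdd]; omega⟩
      rw [Fin.append_right]; exact hs' _
  · rw [he, he', Fin.sum_univ_add]
    congr 1 <;> refine Finset.sum_congr rfl fun i _ => ?_
    · rw [Fin.append_left, Fin.append_left, Fin.append_left, Fin.append_left]
    · rw [Fin.append_right, Fin.append_right, Fin.append_right, Fin.append_right]
  · intro i
    rcases Nat.lt_or_ge i.val n with h | h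
    · have hi : i = Fin.castAdd n' ⟨i, h⟩ := by simp [Fin.castAdd]
      rw [hi, Fin.append_left, Fin.append_left, Fin.append_left]; exact hl _
    · obtain ⟨j, rfl⟩ : ∃ j : Fin n', i = Fin.natAdd n j :=
        ⟨⟨i.val - n, by omega⟩, by rw [Fin.ext_iff]; simp [Fin.natAdd]; omega⟩
      rw [Fin.append_right, Fin.append_right, Fin.append_right]; exact hl' _

lemma rep_neg {W : List X} {y : FreeMonoid Y} {h : MonoidAlgebra k (NW X Y)}
    (H : CRep k W y h) : CRep k W y (-h) := by
  obtain ⟨n, α, a, b, s, hs, he, hl⟩ := H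
  refine ⟨n, fun i => -α i, a, b, s, hs, ?_, hl⟩
  rw [he, ← Finset.sum_neg_distrib]
  exact Finset.sum_congr rfl fun i _ => (neg_smul _ _).symm

lemma rep_sub {W : List X} {y : FreeMonoid Y} {h h' : MonoidAlgebra k (NW X Y)}
    (H : CRep k W y h) (H' : CRep k W y h') : CRep k W y (h - h') := by
  rw [sub_eq_add_neg]; exact rep_add H (rep_neg H')

lemma rep_single {W : List X} {y : FreeMonoid Y} {i j : X} (hij : j < i)
    (a b : NW X Y) (w' : List X)
    (hab : a * ((FreeMonoid.of i * FreeMonoid.of j, 1) : NW X Y) * b =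
      (FreeMonoid.ofList w', y)) (hperm : w'.Perm W)
    (hlex : w' = W ∨ List.Lex (· < ·) w' W) :
    CRep k W y (mono k a * sElt k Y i j * mono k b) := by
  refine ⟨1, fun _ => 1, fun _ => a, fun _ => b, fun _ => sElt k Y i j,
    fun _ => sElt_mem hij, by simp, fun t => ⟨_, w', sElt_lead hij, hab, hperm, hlex⟩⟩

lemma rep_weaken {W W' : List X} {y : FreeMonoid Y} {h : MonoidAlgebra k (NW X Y)}
    (H : CRep k W y h) (hperm : W.Perm W') (hlex : W = W' ∨ List.Lex (· < ·) W W') :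
    CRep k W' y h := by
  obtain ⟨n, α, a, b, s, hs, he, hl⟩ := H
  refine ⟨n, α, a, b, s, hs, he, fun i => ?_⟩
  obtain ⟨m, w', h1, h2, h3, h4⟩ := hl i
  refine ⟨m, w', h1, h2, h3.trans hperm, ?_⟩
  rcases h4 with rfl | h4
  · exact hlex
  · rcases hlex with rfl | hlex
    · exact Or.inr h4
    · exact Or.inr (List.lex_trans lt_trans h4 hlex)

lemma rep_consL {W : List X} {y : FreeMonoid Y} {h : MonoidAlgebra k (NW X Y)} (z : X)
    (H : CRep k W y h) :
    CRep k (z :: W) y (mono k ((FreeMonoid.of z, 1) : NW X Y) * h) := by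
  obtain ⟨n, α, a, b, s, hs, he, hl⟩ := H
  refine ⟨n, α, fun i => (FreeMonoid.of z, 1) * a i, b, s, hs, ?_, ?_⟩
  · rw [he, Finset.mul_sum]
    refine Finset.sum_congr rfl fun i _ => ?_
    rw [mul_smul_comm]
    congr 1
    rw [mono_def, mono_def, mono_def, ← mul_assoc, ← mul_assoc,
      MonoidAlgebra.single_mul_single, one_mul]
    rfl
  · intro i
    obtain ⟨m, w', h1, h2, h3, h4⟩ := hl i
    refine ⟨m, z :: w', h1, ?_, h3.cons z, ?_⟩
    · rw [mul_assoc, mul_assoc, ← mul_assoc (a i), h2]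
      ext : 1
      · show FreeMonoid.of z * FreeMonoid.ofList w' = FreeMonoid.ofList (z :: w')
        rfl
      · show 1 * y = y
        rw [one_mul]
    · rcases h4 with rfl | h4
      · exact Or.inl rfl
      · exact Or.inr (List.Lex.cons h4)

lemma sorted_perm_lex : ∀ (l l' : List X), l'.Perm l → l'.Pairwise (· ≤ ·) →
    l' = l ∨ List.Lex (· < ·) l' l := by
  intro l
  induction l with
  | nil =>
    intro l' hp _
    exact Or.inl hp.eq_nil
  | cons a t ih =>
    intro l' hp hs
    cases l' with
    | nil => simp at hp
    | cons b t' =>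
      have hamem : a ∈ b :: t' := hp.mem_iff.2 List.mem_cons_self
      have hba : b ≤ a := by
        rcases List.mem_cons.1 hamem with rfl | hmem
        · exact le_refl _
        · exact (List.pairwise_cons.mp hs).1 a hmem
      rcases lt_or_eq_of_le hba with h | h
      · exact Or.inr (List.Lex.rel h)
      · subst h
        have ht : t'.Perm t := hp.cons_inv
        rcases ih t' ht (List.pairwise_cons.mp hs).2 with rfl | hl
        · exact Or.inl rfl
        · exact Or.inr (List.Lex.cons hl)

noncomputable def eW (k : Type*) [Field k] {X Y : Type*} [LinearOrder X] [LinearOrder Y]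
    (u : List X) (y : FreeMonoid Y) : MonoidAlgebra k (NW X Y) :=
  mono k ((FreeMonoid.ofList u, y) : NW X Y)

lemma ofList_eq₁ (p q : List X) (i j : X) :
    (FreeMonoid.ofList p) * (FreeMonoid.of i * FreeMonoid.of j) * (FreeMonoid.ofList q) =
      FreeMonoid.ofList (p ++ i :: j :: q) := by
  apply FreeMonoid.toList.injective
  simp [FreeMonoid.toList_mul]

lemma NW_prod (p q : List X) (i j : X) (y : FreeMonoid Y) :
    ((FreeMonoid.ofList p, 1) : NW X Y) * (FreeMonoid.of i * FreeMonoid.of j, 1) *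
      (FreeMonoid.ofList q, y) = (FreeMonoid.ofList (p ++ i :: j :: q), y) := by
  refine Prod.ext ?_ ?_
  · exact ofList_eq₁ p q i j
  · show 1 * 1 * y = y
    rw [one_mul, one_mul]

lemma NW_cons (z : X) (l : List X) (y : FreeMonoid Y) :
    ((FreeMonoid.of z, 1) : NW X Y) * (FreeMonoid.ofList l, y) =
      (FreeMonoid.ofList (z :: l), y) := by
  refine Prod.ext ?_ ?_
  · apply FreeMonoid.toList.injective
    simp [FreeMonoid.toList_mul]
  · show 1 * y = y
    rw [one_mul]

lemma sandwich (A B u1 u2 : NW X Y) :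
    mono k A * (mono k u1 - mono k u2) * mono k B =
      mono k (A * u1 * B) - mono k (A * u2 * B) := by
  simp only [mono_def, mul_sub, sub_mul, MonoidAlgebra.single_mul_single, one_mul, mul_one]

lemma rep_step {i j : X} (hij : j < i) (p q : List X) (y : FreeMonoid Y) :
    CRep k (p ++ i :: j :: q) y
      (eW k (p ++ i :: j :: q) y - eW k (p ++ j :: i :: q) y) := by
  have h := rep_single (k := k) hij (FreeMonoid.ofList p, 1) (FreeMonoid.ofList q, y)
    (p ++ i :: j :: q) (NW_prod p q i j y) (List.Perm.refl _) (Or.inl rfl)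
  have he : mono k ((FreeMonoid.ofList p, 1) : NW X Y) * sElt k Y i j *
      mono k ((FreeMonoid.ofList q, y) : NW X Y) =
      eW k (p ++ i :: j :: q) y - eW k (p ++ j :: i :: q) y := by
    rw [sElt, sandwich, NW_prod, NW_prod, eW, eW]
  rwa [he] at h

lemma rep_insert (y : FreeMonoid Y) :
    ∀ (m : List X), m.Pairwise (· ≤ ·) → ∀ x : X,
      CRep k (x :: m) y (eW k (x :: m) y - eW k (List.orderedInsert (· ≤ ·) x m) y) := by
  intro m
  induction m with
  | nil =>
    intro _ x
    rw [List.orderedInsert, sub_self]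
    exact rep_zero _ _
  | cons z m' IH =>
    intro hs x
    by_cases hxz : x ≤ z
    · rw [List.orderedInsert, if_pos hxz, sub_self]
      exact rep_zero _ _
    · have hzx : z < x := lt_of_not_ge hxz
      rw [List.orderedInsert, if_neg hxz]
      have h1 : CRep k (x :: z :: m') y
          (eW k (x :: z :: m') y - eW k (z :: x :: m') y) := by
        simpa using rep_step (k := k) hzx [] m' y
      have h2 := IH (List.pairwise_cons.mp hs).2 x
      have h3 := rep_consL z h2
      have h4 : mono k ((FreeMonoid.of z, 1) : NW X Y) *
          (eW k (x :: m') y - eW k (List.orderedInsert (· ≤ ·) x m') y) =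
          eW k (z :: x :: m') y - eW k (z :: List.orderedInsert (· ≤ ·) x m') y := by
        rw [eW, eW, eW, eW, mono_def, mono_def, mono_def, mono_def, mono_def, mul_sub,
          MonoidAlgebra.single_mul_single, MonoidAlgebra.single_mul_single, one_mul,
          NW_cons, NW_cons]
      rw [h4] at h3
      have h5 := rep_weaken h3 (List.Perm.swap x z m') (Or.inr (List.Lex.rel hzx))
      have h6 := rep_add h1 h5
      rwa [sub_add_sub_cancel] at h6

lemma rep_sort (y : FreeMonoid Y) (u : List X) :
    CRep k u y (eW k u y - eW k (List.insertionSort (· ≤ ·) u) y) := by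
  induction u with
  | nil =>
    rw [List.insertionSort_nil, sub_self]
    exact rep_zero _ _
  | cons x t IH =>
    rw [List.insertionSort]
    have h1 := rep_consL x IH
    have h4 : mono k ((FreeMonoid.of x, 1) : NW X Y) *
        (eW k t y - eW k (List.insertionSort (· ≤ ·) t) y) =
        eW k (x :: t) y - eW k (x :: List.insertionSort (· ≤ ·) t) y := by
      rw [eW, eW, eW, eW, mono_def, mono_def, mono_def, mono_def, mono_def, mul_sub,
        MonoidAlgebra.single_mul_single, MonoidAlgebra.single_mul_single, one_mul,
        NW_cons, NW_cons]
    rw [h4] at h1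
    have h2 := rep_insert (k := k) y (List.insertionSort (· ≤ ·) t)
      (List.pairwise_insertionSort _ t) x
    have hst : (x :: List.insertionSort (· ≤ ·) t).Perm (x :: t) :=
      (List.perm_insertionSort _ t).cons x
    have hsl : (x :: List.insertionSort (· ≤ ·) t) = (x :: t) ∨
        List.Lex (· < ·) (x :: List.insertionSort (· ≤ ·) t) (x :: t) := by
      rcases sorted_perm_lex t (List.insertionSort (· ≤ ·) t) (List.perm_insertionSort _ t)
        (List.pairwise_insertionSort _ t) with h | h
      · exact Or.inl (by rw [h])
      · exact Or.inr (List.Lex.cons h)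
    have h5 := rep_weaken h2 hst hsl
    have h6 := rep_add h1 h5
    rwa [sub_add_sub_cancel] at h6

lemma rep_diff {u v W : List X} (y : FreeMonoid Y) (hu : u.Perm W) (hv : v.Perm W)
    (hu' : u = W ∨ List.Lex (· < ·) u W) (hv' : v = W ∨ List.Lex (· < ·) v W) :
    CRep k W y (eW k u y - eW k v y) := by
  have hperm : u.Perm v := hu.trans hv.symm
  have hsort : List.insertionSort (· ≤ ·) u = List.insertionSort (· ≤ ·) v :=
    List.Perm.eq_of_pairwise' (List.pairwise_insertionSort _ u) (List.pairwise_insertionSort _ v)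
      ((List.perm_insertionSort _ u).trans (hperm.trans (List.perm_insertionSort _ v).symm))
  have key : eW k u y - eW k v y =
      (eW k u y - eW k (List.insertionSort (· ≤ ·) u) y) -
      (eW k v y - eW k (List.insertionSort (· ≤ ·) v) y) := by
    rw [hsort]; abel
  rw [key]
  exact rep_sub (rep_weaken (rep_sort y u) hu hu') (rep_weaken (rep_sort y v) hv hv')

lemma triv_zero_s10 {lt : NW X Y → NW X Y → Prop} {S : Set (MonoidAlgebra k (NW X Y))}
    (w : NW X Y) : TrivModR lt S w 0 :=
  ⟨0, ![], ![], ![], ![], fun i => i.elim0, by simp, fun i => i.elim0⟩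

lemma triv_add_s10 {lt : NW X Y → NW X Y → Prop} {S : Set (MonoidAlgebra k (NW X Y))}
    {w : NW X Y} {h h' : MonoidAlgebra k (NW X Y)}
    (H : TrivModR lt S w h) (H' : TrivModR lt S w h') : TrivModR lt S w (h + h') := by
  obtain ⟨n, α, a, b, s, hs, he, hl⟩ := H
  obtain ⟨n', α', a', b', s', hs', he', hl'⟩ := H'
  refine ⟨n + n', Fin.append α α', Fin.append a a', Fin.append b b', Fin.append s s',
    ?_, ?_, ?_⟩
  · intro i
    rcases Nat.lt_or_ge i.val n with h | h
    · have : i = Fin.castAdd n' ⟨i, h⟩ := by simp [Fin.castAdd]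
      rw [this, Fin.append_left]; exact hs _
    · obtain ⟨j, rfl⟩ : ∃ j : Fin n', i = Fin.natAdd n j :=
        ⟨⟨i.val - n, by omega⟩, by rw [Fin.ext_iff]; simp [Fin.natAdd]; omega⟩
      rw [Fin.append_right]; exact hs' _
  · rw [he, he', Fin.sum_univ_add]
    congr 1 <;> refine Finset.sum_congr rfl fun i _ => ?_
    · rw [Fin.append_left, Fin.append_left, Fin.append_left, Fin.append_left]
    · rw [Fin.append_right, Fin.append_right, Fin.append_right, Fin.append_right]
  · intro i
    rcases Nat.lt_or_ge i.val n with h | h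
    · have hi : i = Fin.castAdd n' ⟨i, h⟩ := by simp [Fin.castAdd]
      rw [hi, Fin.append_left, Fin.append_left, Fin.append_left]; exact hl _
    · obtain ⟨j, rfl⟩ : ∃ j : Fin n', i = Fin.natAdd n j :=
        ⟨⟨i.val - n, by omega⟩, by rw [Fin.ext_iff]; simp [Fin.natAdd]; omega⟩
      rw [Fin.append_right, Fin.append_right, Fin.append_right]; exact hl' _

lemma triv_neg_s10 {lt : NW X Y → NW X Y → Prop} {S : Set (MonoidAlgebra k (NW X Y))}
    {w : NW X Y} {h : MonoidAlgebra k (NW X Y)}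
    (H : TrivModR lt S w h) : TrivModR lt S w (-h) := by
  obtain ⟨n, α, a, b, s, hs, he, hl⟩ := H
  refine ⟨n, fun i => -α i, a, b, s, hs, ?_, hl⟩
  rw [he, ← Finset.sum_neg_distrib]
  exact Finset.sum_congr rfl fun i _ => (neg_smul _ _).symm

lemma triv_sub {lt : NW X Y → NW X Y → Prop} {S : Set (MonoidAlgebra k (NW X Y))}
    {w : NW X Y} {h h' : MonoidAlgebra k (NW X Y)}
    (H : TrivModR lt S w h) (H' : TrivModR lt S w h') : TrivModR lt S w (h - h') := by
  rw [sub_eq_add_neg]; exact triv_add_s10 H (triv_neg_s10 H')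

lemma rep_triv {W : List X} {y : FreeMonoid Y} {w : NW X Y} {h : MonoidAlgebra k (NW X Y)}
    (hlt : ltN X Y (FreeMonoid.ofList W, y) w) (H : CRep k W y h) :
    TrivModR (ltN X Y) (Scomm k X Y) w h := by
  obtain ⟨n, α, a, b, s, hs, he, hl⟩ := H
  refine ⟨n, α, a, b, s, hs, he, fun i => ?_⟩
  obtain ⟨m, w', h1, h2, h3, h4⟩ := hl i
  refine ⟨m, h1, ?_⟩
  rw [h2]
  rcases h4 with rfl | h4
  · exact hlt
  · refine ltN_trans (ltN_of_lex y ?_ ?_) hlt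
    · simpa [FreeMonoid.toList_ofList] using h3
    · simpa [FreeMonoid.toList_ofList] using h4

/-- main workhorse: a difference of two monomials with permutation-equal `X`-words,
both strictly below `w`, is trivial mod `S`. -/
lemma triv_diff {u v : List X} {y : FreeMonoid Y} {w : NW X Y} (huv : u.Perm v)
    (hu : ltN X Y (FreeMonoid.ofList u, y) w) (hv : ltN X Y (FreeMonoid.ofList v, y) w) :
    TrivModR (ltN X Y) (Scomm k X Y) w (eW k u y - eW k v y) := by
  have h1 := rep_triv hu (rep_sort (k := k) y u)
  have h2 := rep_triv hv (rep_sort (k := k) y v)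
  have hsort : List.insertionSort (· ≤ ·) u = List.insertionSort (· ≤ ·) v :=
    List.Perm.eq_of_pairwise' (List.pairwise_insertionSort _ u) (List.pairwise_insertionSort _ v)
      ((List.perm_insertionSort _ u).trans (huv.trans (List.perm_insertionSort _ v).symm))
  have key : eW k u y - eW k v y =
      (eW k u y - eW k (List.insertionSort (· ≤ ·) u) y) -
      (eW k v y - eW k (List.insertionSort (· ≤ ·) v) y) := by
    rw [hsort]; abel
  rw [key]
  exact triv_sub h1 h2

end P1


section Main
variable {k X Y : Type*} [Field k] [LinearOrder X] [LinearOrder Y]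
set_option linter.unusedSectionVars false

lemma triv_diff' {u v : FreeMonoid X} {y : FreeMonoid Y} {w : NW X Y}
    (huv : u.toList.Perm v.toList) (hu : ltN X Y (u, y) w) (hv : ltN X Y (v, y) w) :
    TrivModR (ltN X Y) (Scomm k X Y) w (mono k ((u, y) : NW X Y) - mono k ((v, y) : NW X Y)) := by
  have := triv_diff (k := k) (y := y) (w := w) huv
    (by simpa [FreeMonoid.ofList_toList] using hu) (by simpa [FreeMonoid.ofList_toList] using hv)
  simpa [eW, FreeMonoid.ofList_toList] using this

lemma fm_eq_one_of_toList {a : FreeMonoid X} (h : a.toList = []) : a = 1 :=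
  FreeMonoid.toList.injective (by simpa using h)

lemma list_incl {α : Type*} {i j i' j' : α} {p q : List α}
    (h : [i, j] = p ++ i' :: j' :: q) : p = [] ∧ q = [] ∧ i = i' ∧ j = j' := by
  have hl := congrArg List.length h
  simp [List.length_append] at hl
  have hp : p = [] := List.length_eq_zero_iff.mp (by omega)
  have hq : q = [] := List.length_eq_zero_iff.mp (by omega)
  subst hp hq
  simp at h
  exact ⟨rfl, rfl, h.1, h.2⟩

lemma fm_incl2 {i j i' j' : X} {a b : FreeMonoid X}
    (h : FreeMonoid.of i * FreeMonoid.of j = a * (FreeMonoid.of i' * FreeMonoid.of j') * b) :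
    a = 1 ∧ b = 1 ∧ i = i' ∧ j = j' := by
  have h' := congrArg FreeMonoid.toList h
  simp only [FreeMonoid.toList_mul, FreeMonoid.toList_of, List.append_assoc,
    List.singleton_append, List.cons_append] at h'
  obtain ⟨hp, hq, hii, hjj⟩ := list_incl h'
  exact ⟨fm_eq_one_of_toList hp, fm_eq_one_of_toList hq, hii, hjj⟩

lemma list_int {α : Type*} {i j i' j' : α} {p q : List α}
    (h : i :: j :: p = q ++ [i', j']) (hlen : p.length < 2) :
    (p = [] ∧ q = [] ∧ i = i' ∧ j = j') ∨ (p = [j'] ∧ q = [i] ∧ i' = j) := by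
  have hl := congrArg List.length h
  simp [List.length_append] at hl
  rcases p with _ | ⟨x, p'⟩
  · left
    have hq : q = [] := by
      apply List.length_eq_zero_iff.mp
      simp at hl
      omega
    subst hq
    simp at h
    exact ⟨rfl, rfl, h.1, h.2⟩
  · rcases p' with _ | ⟨x2, p''⟩
    · right
      have hq : q.length = 1 := by simp at hl; omega
      rcases q with _ | ⟨y, q'⟩
      · simp at hq
      · rcases q' with _ | _
        · simp at h
          exact ⟨by rw [h.2.2], by rw [h.1], h.2.1.symm⟩
        · simp at hq
    · exfalso
      simp at hlen

lemma fm_int2 {i j i' j' : X} {a b : FreeMonoid X}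
    (h : FreeMonoid.of i * FreeMonoid.of j * a = b * (FreeMonoid.of i' * FreeMonoid.of j'))
    (hlen : (FreeMonoid.of i * FreeMonoid.of j * a).length <
      (FreeMonoid.of i * FreeMonoid.of j).length + (FreeMonoid.of i' * FreeMonoid.of j').length) :
    (a = 1 ∧ b = 1 ∧ i = i' ∧ j = j') ∨
    (a = FreeMonoid.of j' ∧ b = FreeMonoid.of i ∧ i' = j) := by
  have h' := congrArg FreeMonoid.toList h
  simp only [FreeMonoid.toList_mul, FreeMonoid.toList_of, List.append_assoc,
    List.singleton_append, List.cons_append, List.nil_append] at h'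
  have hlen' : a.toList.length < 2 := by
    simp only [FreeMonoid.length_mul] at hlen
    have h2 : ∀ z : X, (FreeMonoid.of z : FreeMonoid X).length = 1 := fun _ => rfl
    have h3 : a.length = a.toList.length := rfl
    rw [h2 i, h2 j, h2 i', h2 j', h3] at hlen
    omega
  rcases list_int h' hlen' with ⟨hp, hq, hii, hjj⟩ | ⟨hp, hq, hii⟩
  · exact Or.inl ⟨fm_eq_one_of_toList hp, fm_eq_one_of_toList hq, hii, hjj⟩
  · refine Or.inr ⟨?_, ?_, hii⟩
    · exact FreeMonoid.toList.injective (by simpa using hp)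
    · exact FreeMonoid.toList.injective (by simpa using hq)

lemma fm_one3 {c d : FreeMonoid Y} (h : (1 : FreeMonoid Y) = c * d) :
    c = 1 ∧ d = 1 := by
  have hl := congrArg FreeMonoid.length h
  simp only [FreeMonoid.length_mul] at hl
  have h1 : (1 : FreeMonoid Y).length = 0 := rfl
  constructor
  · exact FreeMonoid.length_eq_zero.mp (by omega)
  · exact FreeMonoid.length_eq_zero.mp (by omega)

lemma lex_append {c s t : List X} (h : List.Lex (· < ·) s t) :
    List.Lex (· < ·) (c ++ s) (c ++ t) := by
  induction c with
  | nil => exact h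
  | cons a c ih => exact List.Lex.cons ih

theorem main_gsb : IsGSB (ltN X Y) (Scomm k X Y) := by
  constructor
  · rintro s ⟨i, j, hij, rfl⟩
    exact sElt_monic hij
  · rintro f hf g hg mf mg p w hmf hmg hcomp
    obtain ⟨i, j, hij, rfl⟩ := hf
    obtain ⟨i', j', hij', rfl⟩ := hg
    have hf : mf = ((FreeMonoid.of i * FreeMonoid.of j, 1) : NW X Y) :=
      lead_unique_s10 hmf (sElt_lead hij)
    have hg : mg = ((FreeMonoid.of i' * FreeMonoid.of j', 1) : NW X Y) :=
      lead_unique_s10 hmg (sElt_lead hij')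
    subst hf hg
    simp only [IsComp] at hcomp
    simp only [one_mul, mul_one] at hcomp
    rcases hcomp with ⟨a,b,c,hfx,hc⟩ | ⟨a,c,d,hfy,hc⟩ | ⟨a,b,c,d,hfx,hfy,hw,hp⟩ |
      ⟨a,b,c,d,hfx,hgy,hw,hp⟩ | ⟨a,b,c,hfx,hlen,hc⟩ | ⟨a,c,d,hfy,hlen,hc⟩ |
      ⟨a,b,c,d,hfx,hfy,hl1,hl2,hw,hp⟩ | ⟨a,b,c,d,hfx,hfy,hl1,hl2,hw,hp⟩ |
      ⟨a,b,c,d,hfx,hc⟩ | ⟨a,b,c,d,hfx,hlen,hc⟩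
    -- case 1.1 : X-inclusion only
    case _ =>
      obtain ⟨ha, hb, hii, hjj⟩ := fm_incl2 hfx
      subst ha hb hii hjj
      rcases hc with ⟨hw, hp⟩ | ⟨hw, hp⟩ <;>
      · have hp0 : p = 0 := by
          rw [hp]
          simp [mono_def, sub_mul, mul_sub, MonoidAlgebra.single_mul_single,
            Prod.mk_mul_mk, one_mul, mul_one, mul_assoc]
        rw [hp0]
        exact triv_zero_s10 w
    -- case 1.2 : Y-inclusion only
    case _ =>
      obtain ⟨hc1, hd1⟩ := fm_one3 hfy
      subst hc1 hd1
      rcases hc with ⟨hw, hp⟩ | ⟨hw, hp⟩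
      · subst hw
        have hp' : p = mono k ((FreeMonoid.of i * (FreeMonoid.of j *
              (a * (FreeMonoid.of j' * FreeMonoid.of i'))), 1) : NW X Y) -
            mono k ((FreeMonoid.of j * (FreeMonoid.of i *
              (a * (FreeMonoid.of i' * FreeMonoid.of j'))), 1) : NW X Y) := by
          rw [hp]
          simp [mono_def, sub_mul, mul_sub, MonoidAlgebra.single_mul_single,
            Prod.mk_mul_mk, one_mul, mul_one, mul_assoc]
        rw [hp']
        have p1 : (a.toList ++ [j', i']).Perm (a.toList ++ [i', j']) :=
          List.Perm.append_left a.toList (List.Perm.swap i' j' [])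
        refine triv_diff' ?_ ?_ ?_
        · simp only [FreeMonoid.toList_mul, FreeMonoid.toList_of, List.cons_append,
            List.singleton_append, List.nil_append, List.append_assoc]
          exact ((p1.cons j).cons i).trans (List.Perm.swap j i _)
        · refine ltN_of_lex 1 ?_ ?_ <;>
            simp only [FreeMonoid.toList_mul, FreeMonoid.toList_of, List.cons_append,
              List.singleton_append, List.nil_append, List.append_assoc]
          · exact (p1.cons j).cons i
          · exact List.Lex.cons (List.Lex.cons (lex_append (List.Lex.rel hij')))
        · refine ltN_of_lex 1 ?_ ?_ <;>
            simp only [FreeMonoid.toList_mul, FreeMonoid.toList_of, List.cons_append,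
              List.singleton_append, List.nil_append, List.append_assoc]
          · exact (List.Perm.swap j i _).symm
          · exact List.Lex.rel hij
      · subst hw
        have hp' : p = mono k ((FreeMonoid.of j' * (FreeMonoid.of i' *
              (a * (FreeMonoid.of i * FreeMonoid.of j))), 1) : NW X Y) -
            mono k ((FreeMonoid.of i' * (FreeMonoid.of j' *
              (a * (FreeMonoid.of j * FreeMonoid.of i))), 1) : NW X Y) := by
          rw [hp]
          simp [mono_def, sub_mul, mul_sub, MonoidAlgebra.single_mul_single,
            Prod.mk_mul_mk, one_mul, mul_one, mul_assoc]
        rw [hp']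
        have p1 : (a.toList ++ [j, i]).Perm (a.toList ++ [i, j]) :=
          List.Perm.append_left a.toList (List.Perm.swap i j [])
        refine triv_diff' ?_ ?_ ?_
        · simp only [FreeMonoid.toList_mul, FreeMonoid.toList_of, List.cons_append,
            List.singleton_append, List.nil_append, List.append_assoc]
          exact (List.Perm.swap i' j' _).trans (((p1.cons j').cons i').symm)
        · refine ltN_of_lex 1 ?_ ?_ <;>
            simp only [FreeMonoid.toList_mul, FreeMonoid.toList_of, List.cons_append,
              List.singleton_append, List.nil_append, List.append_assoc]
          · exact List.Perm.swap i' j' _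
          · exact List.Lex.rel hij'
        · refine ltN_of_lex 1 ?_ ?_ <;>
            simp only [FreeMonoid.toList_mul, FreeMonoid.toList_of, List.cons_append,
              List.singleton_append, List.nil_append, List.append_assoc]
          · exact (p1.cons j').cons i'
          · exact List.Lex.cons (List.Lex.cons (lex_append (List.Lex.rel hij)))
    -- case 1.3 : X,Y-inclusion
    case _ =>
      obtain ⟨ha, hb, hii, hjj⟩ := fm_incl2 hfx
      obtain ⟨hc1, hd1⟩ := fm_one3 hfy
      subst ha hb hii hjj hc1 hd1
      have hp0 : p = 0 := by
        rw [hp]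
        simp [mono_def, sub_mul, mul_sub, MonoidAlgebra.single_mul_single,
          Prod.mk_mul_mk, one_mul, mul_one, mul_assoc]
      rw [hp0]
      exact triv_zero_s10 w
    -- case 1.4 : X,Y-skew-inclusion
    case _ =>
      obtain ⟨ha, hb, hii, hjj⟩ := fm_incl2 hfx
      obtain ⟨hc1, hd1⟩ := fm_one3 hgy
      subst ha hb hii hjj hc1 hd1
      have hp0 : p = 0 := by
        rw [hp]
        simp [mono_def, sub_mul, mul_sub, MonoidAlgebra.single_mul_single,
          Prod.mk_mul_mk, one_mul, mul_one, mul_assoc]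
      rw [hp0]
      exact triv_zero_s10 w
    -- case 2.1 : X-intersection only
    case _ =>
      rcases fm_int2 hfx hlen with ⟨ha, hb, hii, hjj⟩ | ⟨ha, hb, hii⟩
      · subst ha hb hii hjj
        rcases hc with ⟨hw, hp⟩ | ⟨hw, hp⟩ <;>
        · have hp0 : p = 0 := by
            rw [hp]
            simp [mono_def, sub_mul, mul_sub, MonoidAlgebra.single_mul_single,
              Prod.mk_mul_mk, one_mul, mul_one, mul_assoc]
          rw [hp0]
          exact triv_zero_s10 w
      · subst ha hb hii
        rcases hc with ⟨hw, hp⟩ | ⟨hw, hp⟩ <;>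
        · subst hw
          have hp' : p = mono k ((FreeMonoid.of i * (FreeMonoid.of j' * FreeMonoid.of i'),
                c) : NW X Y) -
              mono k ((FreeMonoid.of i' * (FreeMonoid.of i * FreeMonoid.of j'), c) : NW X Y) := by
            rw [hp]
            simp [mono_def, sub_mul, mul_sub, MonoidAlgebra.single_mul_single,
              Prod.mk_mul_mk, one_mul, mul_one, mul_assoc]
          rw [hp']
          refine triv_diff' ?_ ?_ ?_
          · simp only [FreeMonoid.toList_mul, FreeMonoid.toList_of, List.cons_append,
              List.singleton_append, List.nil_append, List.append_assoc]
            exact ((List.Perm.swap i' j' []).cons i).trans (List.Perm.swap i i' [j']).symm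
          · refine ltN_of_lex c ?_ ?_ <;>
              simp only [FreeMonoid.toList_mul, FreeMonoid.toList_of, List.cons_append,
                List.singleton_append, List.nil_append, List.append_assoc]
            · exact (List.Perm.swap i' j' []).cons i
            · exact List.Lex.cons (List.Lex.rel hij')
          · refine ltN_of_lex c ?_ ?_ <;>
              simp only [FreeMonoid.toList_mul, FreeMonoid.toList_of, List.cons_append,
                List.singleton_append, List.nil_append, List.append_assoc]
            · exact List.Perm.swap i i' [j']
            · exact List.Lex.rel hij
    -- case 2.2 : Y-intersection only (impossible)
    case _ => simp at hlen
    -- case 2.3 : X,Y-intersection (impossible)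
    case _ => simp at hl2
    -- case 2.4 : X,Y-skew-intersection (impossible)
    case _ => simp at hl2
    -- case 3.1 : X-inclusion and Y-intersection (impossible)
    case _ =>
      rcases hc with ⟨h1, h2, hw, hp⟩ | ⟨h1, h2, hw, hp⟩ <;> simp at h2
    -- case 3.2 : X-intersection and Y-inclusion
    case _ =>
      rcases hc with ⟨h1, hw, hp⟩ | ⟨h1, hw, hp⟩ <;>
      · obtain ⟨hc1, hd1⟩ := fm_one3 h1
        subst hc1 hd1
        rcases fm_int2 hfx hlen with ⟨ha, hb, hii, hjj⟩ | ⟨ha, hb, hii⟩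
        · subst ha hb hii hjj
          have hp0 : p = 0 := by
            rw [hp]
            simp [mono_def, sub_mul, mul_sub, MonoidAlgebra.single_mul_single,
              Prod.mk_mul_mk, one_mul, mul_one, mul_assoc]
          rw [hp0]
          exact triv_zero_s10 w
        · subst ha hb hii
          subst hw
          have hp' : p = mono k ((FreeMonoid.of i * (FreeMonoid.of j' * FreeMonoid.of i'),
                1) : NW X Y) -
              mono k ((FreeMonoid.of i' * (FreeMonoid.of i * FreeMonoid.of j'), 1) : NW X Y) := by
            rw [hp]
            simp [mono_def, sub_mul, mul_sub, MonoidAlgebra.single_mul_single,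
              Prod.mk_mul_mk, one_mul, mul_one, mul_assoc]
          rw [hp']
          refine triv_diff' ?_ ?_ ?_
          · simp only [FreeMonoid.toList_mul, FreeMonoid.toList_of, List.cons_append,
              List.singleton_append, List.nil_append, List.append_assoc]
            exact ((List.Perm.swap i' j' []).cons i).trans (List.Perm.swap i i' [j']).symm
          · refine ltN_of_lex 1 ?_ ?_ <;>
              simp only [FreeMonoid.toList_mul, FreeMonoid.toList_of, List.cons_append,
                List.singleton_append, List.nil_append, List.append_assoc]
            · exact (List.Perm.swap i' j' []).cons i
            · exact List.Lex.cons (List.Lex.rel hij')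
          · refine ltN_of_lex 1 ?_ ?_ <;>
              simp only [FreeMonoid.toList_mul, FreeMonoid.toList_of, List.cons_append,
                List.singleton_append, List.nil_append, List.append_assoc]
            · exact List.Perm.swap i i' [j']
            · exact List.Lex.rel hij
end Main

section Part2
variable (k X Y : Type*) [Field k] [LinearOrder X] [LinearOrder Y]

abbrev Sset' : Set (MonoidAlgebra k (FreeMonoid (X ⊕ Y))) :=
  {p : MonoidAlgebra k (FreeMonoid (X ⊕ Y)) | ∃ i j : X, j < i ∧
    p = mono k (FreeMonoid.of (Sum.inl i) * FreeMonoid.of (Sum.inl j)) -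
        mono k (FreeMonoid.of (Sum.inl j) * FreeMonoid.of (Sum.inl i))}

abbrev myrel := relOf (Tset k X Y ∪ Sset' k X Y)

abbrev RQ := RingQuot (myrel k X Y)

abbrev TP := TensorProduct k (MvPolynomial X k) (MonoidAlgebra k (FreeMonoid Y))

noncomputable def phi0 : MonoidAlgebra k (FreeMonoid (X ⊕ Y)) →ₐ[k] TP k X Y :=
  MonoidAlgebra.lift k (TP k X Y) (FreeMonoid (X ⊕ Y))
    (FreeMonoid.lift (Sum.elim
      (fun x => (MvPolynomial.X x : MvPolynomial X k) ⊗ₜ[k] 1)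
      (fun y => (1 : MvPolynomial X k) ⊗ₜ[k]
        (MonoidAlgebra.of k (FreeMonoid Y) (FreeMonoid.of y)))))

lemma phi0_rel : ∀ ⦃a b⦄, myrel k X Y a b → phi0 k X Y a = phi0 k X Y b := by
  rintro a b ⟨ha, rfl⟩
  rw [map_zero]
  rcases ha with ⟨x, y, rfl⟩ | ⟨i, j, hij, rfl⟩ <;>
  · simp only [mono, MonoidAlgebra.of_apply, map_sub, phi0, MonoidAlgebra.lift_single,
      one_smul, map_mul, FreeMonoid.lift_eval_of, Sum.elim_inl, Sum.elim_inr,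
      Algebra.TensorProduct.tmul_mul_tmul, one_mul, mul_one]
    first
    | exact sub_self _
    | (rw [mul_comm]; exact sub_self _)

noncomputable def Phi : RQ k X Y →ₐ[k] TP k X Y :=
  RingQuot.liftAlgHom k ⟨phi0 k X Y, phi0_rel k X Y⟩

noncomputable def xi (x : X) : RQ k X Y :=
  RingQuot.mkAlgHom k (myrel k X Y) (MonoidAlgebra.single (FreeMonoid.of (Sum.inl x)) 1)

noncomputable def eta (y : Y) : RQ k X Y :=
  RingQuot.mkAlgHom k (myrel k X Y) (MonoidAlgebra.single (FreeMonoid.of (Sum.inr y)) 1)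

set_option linter.unusedSectionVars false

lemma comm_xy (x : X) (y : Y) : Commute (xi k X Y x) (eta k X Y y) := by
  have h := RingQuot.mkAlgHom_rel k (s := myrel k X Y)
    (x := mono k (FreeMonoid.of (Sum.inr y) * FreeMonoid.of (Sum.inl x)) -
        mono k (FreeMonoid.of (Sum.inl x) * FreeMonoid.of (Sum.inr y))) (y := 0)
    ⟨Or.inl ⟨x, y, rfl⟩, rfl⟩
  rw [map_sub, map_zero, sub_eq_zero] at h
  unfold Commute SemiconjBy xi eta
  rw [← map_mul, ← map_mul, MonoidAlgebra.single_mul_single, MonoidAlgebra.single_mul_single,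
    one_mul]
  simpa only [mono, MonoidAlgebra.of_apply] using h.symm

lemma comm_xx (x x' : X) : Commute (xi k X Y x) (xi k X Y x') := by
  rcases lt_trichotomy x x' with h | h | h
  · have hr := RingQuot.mkAlgHom_rel k (s := myrel k X Y)
      (x := mono k (FreeMonoid.of (Sum.inl x') * FreeMonoid.of (Sum.inl x)) -
          mono k (FreeMonoid.of (Sum.inl x) * FreeMonoid.of (Sum.inl x'))) (y := 0)
      ⟨Or.inr ⟨x', x, h, rfl⟩, rfl⟩
    rw [map_sub, map_zero, sub_eq_zero] at hr
    unfold Commute SemiconjBy xi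
    rw [← map_mul, ← map_mul, MonoidAlgebra.single_mul_single, MonoidAlgebra.single_mul_single,
      one_mul]
    simpa only [mono, MonoidAlgebra.of_apply] using hr.symm
  · subst h; exact Commute.refl _
  · have hr := RingQuot.mkAlgHom_rel k (s := myrel k X Y)
      (x := mono k (FreeMonoid.of (Sum.inl x) * FreeMonoid.of (Sum.inl x')) -
          mono k (FreeMonoid.of (Sum.inl x') * FreeMonoid.of (Sum.inl x))) (y := 0)
      ⟨Or.inr ⟨x, x', h, rfl⟩, rfl⟩
    rw [map_sub, map_zero, sub_eq_zero] at hr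
    unfold Commute SemiconjBy xi
    rw [← map_mul, ← map_mul, MonoidAlgebra.single_mul_single, MonoidAlgebra.single_mul_single,
      one_mul]
    simpa only [mono, MonoidAlgebra.of_apply] using hr

noncomputable def adjX : Subalgebra k (RQ k X Y) := Algebra.adjoin k (Set.range (xi k X Y))

instance : IsMulCommutative (adjX k X Y) :=
  Algebra.isMulCommutative_adjoin k (by
    rintro a ⟨x, rfl⟩ b ⟨x', rfl⟩
    exact comm_xx k X Y x x')

open scoped IsMulCommutative in
noncomputable def psi1 : MvPolynomial X k →ₐ[k] RQ k X Y :=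
  (adjX k X Y).val.comp
    (MvPolynomial.aeval (R := k) (S₁ := adjX k X Y)
      (fun x => ⟨xi k X Y x, Algebra.subset_adjoin (Set.mem_range_self x)⟩))

lemma psi1_X (x : X) : psi1 k X Y (MvPolynomial.X x) = xi k X Y x := by
  simp [psi1]

noncomputable def psi2 : MonoidAlgebra k (FreeMonoid Y) →ₐ[k] RQ k X Y :=
  MonoidAlgebra.lift k (RQ k X Y) (FreeMonoid Y) (FreeMonoid.lift (eta k X Y))

lemma comm_x_psi2 (x : X) (q : MonoidAlgebra k (FreeMonoid Y)) :
    Commute (xi k X Y x) (psi2 k X Y q) := by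
  induction q using MonoidAlgebra.induction_on with
  | of m =>
    rw [psi2, MonoidAlgebra.lift_of]
    induction m using FreeMonoid.inductionOn' with
    | one => simpa using Commute.one_right _
    | of_mul y m ih =>
      rw [map_mul]
      exact Commute.mul_right (by simpa using comm_xy k X Y x y) ih
  | add p q hp hq => rw [map_add]; exact hp.add_right hq
  | smul r p hp => rw [map_smul]; exact hp.smul_right r

lemma comm_psi (p : MvPolynomial X k) (q : MonoidAlgebra k (FreeMonoid Y)) :
    Commute (psi1 k X Y p) (psi2 k X Y q) := by
  have hmem : psi1 k X Y p ∈ adjX k X Y := by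
    rw [psi1, AlgHom.comp_apply]
    exact SetLike.coe_mem _
  revert hmem
  generalize psi1 k X Y p = r
  intro hmem
  induction hmem using Algebra.adjoin_induction with
  | mem r hr => obtain ⟨x, rfl⟩ := hr; exact comm_x_psi2 k X Y x q
  | algebraMap r => exact Algebra.commutes r _
  | add a b ha hb hA hB => exact hA.add_left hB
  | mul a b ha hb hA hB => exact hA.mul_left hB

noncomputable def Psi : TP k X Y →ₐ[k] RQ k X Y :=
  Algebra.TensorProduct.lift (psi1 k X Y) (psi2 k X Y) (comm_psi k X Y)

lemma Phi_xi (x : X) : Phi k X Y (xi k X Y x) = MvPolynomial.X x ⊗ₜ[k] 1 := by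
  rw [Phi, xi, RingQuot.liftAlgHom_mkAlgHom_apply]
  simp [phi0, MonoidAlgebra.lift_single]

lemma Phi_eta (y : Y) :
    Phi k X Y (eta k X Y y) = 1 ⊗ₜ[k] (MonoidAlgebra.single (FreeMonoid.of y) 1) := by
  rw [Phi, eta, RingQuot.liftAlgHom_mkAlgHom_apply]
  simp [phi0, MonoidAlgebra.lift_single]

lemma Phi_Psi : (Phi k X Y).comp (Psi k X Y) = AlgHom.id k (TP k X Y) := by
  apply Algebra.TensorProduct.ext
  · apply MvPolynomial.algHom_ext
    intro i
    simp only [AlgHom.comp_apply, Algebra.TensorProduct.includeLeft_apply, AlgHom.id_apply]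
    rw [Psi, Algebra.TensorProduct.lift_tmul, map_one, mul_one, psi1_X, Phi_xi]
  · refine MonoidAlgebra.algHom_ext ?_ (Subsingleton.elim _ _)
    intro m
    simp only [AlgHom.comp_apply, AlgHom.restrictScalars_apply,
      Algebra.TensorProduct.includeRight_apply, AlgHom.id_apply]
    rw [Psi, Algebra.TensorProduct.lift_tmul, map_one, one_mul]
    induction m using FreeMonoid.inductionOn' with
    | one =>
      have : (MonoidAlgebra.single (1 : FreeMonoid Y) (1:k)) = 1 := rfl
      rw [this, map_one, map_one]
      exact Algebra.TensorProduct.one_def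
    | of_mul y m ih =>
      have : (MonoidAlgebra.single (FreeMonoid.of y * m) (1:k)) =
          MonoidAlgebra.single (FreeMonoid.of y) 1 * MonoidAlgebra.single m 1 := by
        rw [MonoidAlgebra.single_mul_single, one_mul]
      rw [this, map_mul, map_mul, ih]
      have h2 : psi2 k X Y (MonoidAlgebra.single (FreeMonoid.of y) 1) = eta k X Y y := by
        simp [psi2, MonoidAlgebra.lift_single]
      rw [h2, Phi_eta, Algebra.TensorProduct.tmul_mul_tmul, one_mul,
        MonoidAlgebra.single_mul_single, one_mul]

lemma Psi_Phi : (Psi k X Y).comp (Phi k X Y) = AlgHom.id k (RQ k X Y) := by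
  apply RingQuot.ringQuot_ext'
  refine MonoidAlgebra.algHom_ext ?_ (Subsingleton.elim _ _)
  intro m
  simp only [AlgHom.comp_apply, AlgHom.id_apply]
  induction m using FreeMonoid.inductionOn' with
  | one =>
    have : (MonoidAlgebra.single (1 : FreeMonoid (X ⊕ Y)) (1:k)) = 1 := rfl
    rw [this, map_one, map_one, map_one]
  | of_mul z m ih =>
    have : (MonoidAlgebra.single (FreeMonoid.of z * m) (1:k)) =
        MonoidAlgebra.single (FreeMonoid.of z) 1 * MonoidAlgebra.single m 1 := by
      rw [MonoidAlgebra.single_mul_single, one_mul]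
    rw [this, map_mul, map_mul, map_mul, ih]
    congr 1
    rw [Phi, RingQuot.liftAlgHom_mkAlgHom_apply]
    cases z with
    | inl x =>
      have : phi0 k X Y (MonoidAlgebra.single (FreeMonoid.of (Sum.inl x)) 1) =
          MvPolynomial.X x ⊗ₜ[k] 1 := by simp [phi0, MonoidAlgebra.lift_single]
      rw [this, Psi, Algebra.TensorProduct.lift_tmul, map_one, mul_one, psi1_X, xi]
    | inr y =>
      have : phi0 k X Y (MonoidAlgebra.single (FreeMonoid.of (Sum.inr y)) 1) =
          1 ⊗ₜ[k] (MonoidAlgebra.single (FreeMonoid.of y) 1) := by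
        simp [phi0, MonoidAlgebra.lift_single]
      rw [this, Psi, Algebra.TensorProduct.lift_tmul, map_one, one_mul]
      have h2 : psi2 k X Y (MonoidAlgebra.single (FreeMonoid.of y) 1) = eta k X Y y := by
        simp [psi2, MonoidAlgebra.lift_single]
      rw [h2, eta]

noncomputable def theEquiv : TP k X Y ≃ₐ[k] RQ k X Y :=
  AlgEquiv.ofAlgHom (Psi k X Y) (Phi k X Y) (Psi_Phi k X Y) (Phi_Psi k X Y)

end Part2

/-- `S = {xᵢxⱼ - xⱼxᵢ : xᵢ > xⱼ}` is a Gröbner–Shirshov basis in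
`k⟨X⟩ ⊗ k⟨Y⟩` for the deg-lex order on `X*Y*`, and consequently
`k[X] ⊗ k⟨Y⟩ ≅ k⟨X ∪ Y | T ∪ S⟩`. -/
theorem stmt_10 (k X Y : Type*) [Field k] [LinearOrder X] [LinearOrder Y] :
    IsGSB (lexNW (degLex ((· < ·) : X → X → Prop)) (degLex ((· < ·) : Y → Y → Prop)))
      {p : MonoidAlgebra k (NW X Y) | ∃ i j : X, j < i ∧
        p = mono k ((FreeMonoid.of i * FreeMonoid.of j, 1) : NW X Y) -
            mono k ((FreeMonoid.of j * FreeMonoid.of i, 1) : NW X Y)} ∧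
    Nonempty
      ((TensorProduct k (MvPolynomial X k) (MonoidAlgebra k (FreeMonoid Y))) ≃ₐ[k]
        RingQuot (relOf (Tset k X Y ∪
          {p : MonoidAlgebra k (FreeMonoid (X ⊕ Y)) | ∃ i j : X, j < i ∧
            p = mono k (FreeMonoid.of (Sum.inl i) * FreeMonoid.of (Sum.inl j)) -
                mono k (FreeMonoid.of (Sum.inl j) * FreeMonoid.of (Sum.inl i))}))) := by
  exact ⟨main_gsb, ⟨theEquiv k X Y⟩⟩
end

section
/- Let a, b ∈ X* be sorted words (a = δ(γ(a)), b = δ(γ(b))) and s ∈ k[X]. If w = a·δ(s̄)·b = δ(γ(ab)·s̄), then a·δ(s)·b ≡ δ(γ(ab)·s) modulo (S₁, w), where S₁ = {xᵢxⱼ - xⱼxᵢ : i > j}; i.e., the difference a δ(s) b - δ(γ(ab)s) is a k-linear combination of terms c·h·d with h ∈ S₁, c, d ∈ X*, and leading words < w. -/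
def Combo {k M : Type*} [Semiring k] [Monoid M] (lt : M → M → Prop)
    (S : Set (MonoidAlgebra k M)) (P : M → Prop) (h : MonoidAlgebra k M) : Prop :=
  ∃ (n : ℕ) (α : Fin n → k) (a b : Fin n → M) (s : Fin n → MonoidAlgebra k M),
    (∀ i, s i ∈ S) ∧
    h = ∑ i, α i • (mono k (a i) * s i * mono k (b i)) ∧
    ∀ i, ∃ m, IsLeadR lt (s i) m ∧ P (a i * m * b i)

section ComboLemmas
variable {k M : Type*} [CommSemiring k] [Monoid M] {lt : M → M → Prop}
  {S : Set (MonoidAlgebra k M)} {P Q : M → Prop}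

theorem combo_zero : Combo lt S P (0 : MonoidAlgebra k M) :=
  ⟨0, nofun, nofun, nofun, nofun, nofun, by simp, nofun⟩

theorem combo_mono (hPQ : ∀ u, P u → Q u) {h : MonoidAlgebra k M} (hc : Combo lt S P h) :
    Combo lt S Q h := by
  obtain ⟨n, α, a, b, s, hS, he, hl⟩ := hc
  exact ⟨n, α, a, b, s, hS, he, fun i => (hl i).imp fun m hm => ⟨hm.1, hPQ _ hm.2⟩⟩

theorem combo_add {h₁ h₂ : MonoidAlgebra k M} (hc₁ : Combo lt S P h₁) (hc₂ : Combo lt S P h₂) :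
    Combo lt S P (h₁ + h₂) := by
  obtain ⟨n₁, α₁, a₁, b₁, s₁, hS₁, he₁, hl₁⟩ := hc₁
  obtain ⟨n₂, α₂, a₂, b₂, s₂, hS₂, he₂, hl₂⟩ := hc₂
  refine ⟨n₁ + n₂, Fin.addCases α₁ α₂, Fin.addCases a₁ a₂, Fin.addCases b₁ b₂,
    Fin.addCases s₁ s₂, fun i => ?_, ?_, fun i => ?_⟩
  · refine Fin.addCases (fun j => ?_) (fun j => ?_) i <;> simp [hS₁, hS₂]
  · rw [he₁, he₂, Fin.sum_univ_add]
    congr 1 <;> [skip; skip] <;> exact Finset.sum_congr rfl fun j _ => by simp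
  · refine Fin.addCases (fun j => ?_) (fun j => ?_) i <;> simpa using (by first | exact hl₁ j | exact hl₂ j)

theorem combo_smul (c : k) {h : MonoidAlgebra k M} (hc : Combo lt S P h) :
    Combo lt S P (c • h) := by
  obtain ⟨n, α, a, b, s, hS, he, hl⟩ := hc
  exact ⟨n, fun i => c * α i, a, b, s, hS, by rw [he, Finset.smul_sum]; simp [smul_smul], hl⟩

theorem combo_conj (c d : M) (hPQ : ∀ u, P u → Q (c * u * d)) {h : MonoidAlgebra k M}
    (hc : Combo lt S P h) : Combo lt S Q (mono k c * h * mono k d) := by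
  obtain ⟨n, α, a, b, s, hS, he, hl⟩ := hc
  refine ⟨n, α, fun i => c * a i, fun i => b i * d, s, hS, ?_, fun i => ?_⟩
  · rw [he, Finset.mul_sum, Finset.sum_mul]
    refine Finset.sum_congr rfl fun i _ => ?_
    simp only [mono, map_mul, mul_smul_comm, smul_mul_assoc, mul_assoc]
  · obtain ⟨m, hm, hp⟩ := hl i
    exact ⟨m, hm, by simpa [mul_assoc] using hPQ _ hp⟩

theorem combo_single {s₀ : MonoidAlgebra k M} (hs : s₀ ∈ S) {m : M} (hm : IsLeadR lt s₀ m)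
    (c d : M) (hP : P (c * m * d)) : Combo lt S P (mono k c * s₀ * mono k d) :=
  ⟨1, fun _ => 1, fun _ => c, fun _ => d, fun _ => s₀, fun _ => hs, by simp,
    fun _ => ⟨m, hm, hP⟩⟩

theorem combo_sum {ι : Type*} {t : Finset ι} {f : ι → MonoidAlgebra k M}
    (hf : ∀ i ∈ t, Combo lt S P (f i)) : Combo lt S P (∑ i ∈ t, f i) :=
  Finset.sum_induction f _ (fun _ _ => combo_add) combo_zero hf

end ComboLemmas

set_option linter.unusedSectionVars false
section SortPart
variable {k X : Type*} [Field k] [LinearOrder X]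
  (ltC : Multiplicative (Multiset X) → Multiplicative (Multiset X) → Prop)

theorem gam_mul (u v : FreeMonoid X) : gam (u * v) = gam u * gam v := by
  simp only [gam, FreeMonoid.toList_mul]
  rw [← ofAdd_add, Multiset.coe_add]

theorem gam_eq_iff {u v : FreeMonoid X} :
    gam u = gam v ↔ (↑u.toList : Multiset X) = ↑v.toList := by
  constructor
  · intro h; exact Multiplicative.ofAdd.injective h
  · intro h; simp [gam, h]

theorem gam_ofList (l : List X) : gam (FreeMonoid.ofList l) = Multiplicative.ofAdd (↑l : Multiset X) := rfl

theorem gam_dword (m : Multiplicative (Multiset X)) : gam (dword m) = m := by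
  simp [gam, dword, Multiset.sort_eq]

theorem comm_lead {x y : X} (h : y < x) :
    IsLeadR (liftOrd ltC)
      (mono k (FreeMonoid.of x * FreeMonoid.of y) - mono k (FreeMonoid.of y * FreeMonoid.of x))
      (FreeMonoid.of x * FreeMonoid.of y) := by
  classical
  have hne : (FreeMonoid.of y * FreeMonoid.of x) ≠ (FreeMonoid.of x * FreeMonoid.of y) := by
    intro he
    have h2 := congrArg FreeMonoid.toList he
    simp only [FreeMonoid.toList_mul, FreeMonoid.toList_of] at h2
    rcases List.cons_eq_cons.mp h2 with ⟨h1, _⟩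
    exact h.ne h1
  have hgam : gam (FreeMonoid.of y * FreeMonoid.of x) = gam (FreeMonoid.of x * FreeMonoid.of y) := by
    rw [gam_eq_iff]
    simp only [FreeMonoid.toList_mul, FreeMonoid.toList_of]
    exact Multiset.coe_eq_coe.mpr (List.Perm.swap x y [])
  rw [IsLeadR, mono, mono, MonoidAlgebra.of_apply, MonoidAlgebra.of_apply,
    MonoidAlgebra.coeff_sub, MonoidAlgebra.coeff_single, MonoidAlgebra.coeff_single]
  constructor
  · rw [Finsupp.mem_support_iff, Finsupp.sub_apply, Finsupp.single_eq_same,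
      Finsupp.single_eq_of_ne hne.symm]
    simp
  · intro u hu hune
    rw [Finsupp.mem_support_iff, Finsupp.sub_apply] at hu
    have hv : u = FreeMonoid.of y * FreeMonoid.of x := by
      by_contra hne2
      rw [Finsupp.single_eq_of_ne (fun hh => hune hh),
        Finsupp.single_eq_of_ne (fun hh => hne2 hh)] at hu
      simp at hu
    subst hv
    exact Or.inr ⟨hgam, List.Lex.rel h⟩

end SortPart

section SortPart2
variable {k X : Type*} [Field k] [LinearOrder X]
  (ltC : Multiplicative (Multiset X) → Multiplicative (Multiset X) → Prop)

theorem swap_combo {x y : X} (h : y < x) (t : List X) :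
    Combo (liftOrd ltC) (commSet k X)
      (fun u => gam u = gam (FreeMonoid.ofList (x :: y :: t)))
      (mono k (FreeMonoid.ofList (x :: y :: t)) - mono k (FreeMonoid.ofList (y :: x :: t))) := by
  have hmem : (mono k (FreeMonoid.of x * FreeMonoid.of y)
      - mono k (FreeMonoid.of y * FreeMonoid.of x)) ∈ commSet k X := ⟨x, y, h, rfl⟩
  have he : mono k (FreeMonoid.ofList (x :: y :: t)) - mono k (FreeMonoid.ofList (y :: x :: t))
      = mono k (1 : FreeMonoid X) * (mono k (FreeMonoid.of x * FreeMonoid.of y)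
        - mono k (FreeMonoid.of y * FreeMonoid.of x)) * mono k (FreeMonoid.ofList t) := by
    simp only [mono, map_one, one_mul, sub_mul, ← map_mul]
    rfl
  rw [he]
  exact combo_single hmem (comm_lead ltC h) 1 (FreeMonoid.ofList t) rfl

theorem insert_combo (x : X) : ∀ l : List X, l.Pairwise (· ≤ ·) →
    Combo (liftOrd ltC) (commSet k X)
      (fun u => gam u = gam (FreeMonoid.ofList (x :: l)))
      (mono k (FreeMonoid.ofList (x :: l))
        - mono k (FreeMonoid.ofList (List.orderedInsert (· ≤ ·) x l)))
  | [], _ => by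
    rw [show List.orderedInsert (· ≤ ·) x [] = [x] from rfl, sub_self]
    exact combo_zero
  | y :: t, hs => by
    by_cases hxy : x ≤ y
    · rw [show List.orderedInsert (· ≤ ·) x (y :: t) = x :: y :: t by
        simp [List.orderedInsert, hxy], sub_self]
      exact combo_zero
    · have hyx : y < x := not_le.mp hxy
      have hins : List.orderedInsert (· ≤ ·) x (y :: t)
          = y :: List.orderedInsert (· ≤ ·) x t := by
        simp [List.orderedInsert, hxy]
      have hyxt : gam (FreeMonoid.ofList (y :: x :: t)) = gam (FreeMonoid.ofList (x :: y :: t)) := by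
        rw [gam_eq_iff]
        exact Multiset.coe_eq_coe.mpr (List.Perm.swap x y t)
      rw [hins, ← sub_add_sub_cancel _ (mono k (FreeMonoid.ofList (y :: x :: t))) _]
      refine combo_add (swap_combo ltC hyx t) ?_
      have ht : t.Pairwise (· ≤ ·) := hs.of_cons
      have he2 : mono k (FreeMonoid.ofList (y :: x :: t))
          - mono k (FreeMonoid.ofList (y :: List.orderedInsert (· ≤ ·) x t))
          = mono k (FreeMonoid.of y) * (mono k (FreeMonoid.ofList (x :: t))
            - mono k (FreeMonoid.ofList (List.orderedInsert (· ≤ ·) x t))) * mono k 1 := by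
        simp only [mono, map_one, mul_one, mul_sub, ← map_mul]
        rfl
      rw [he2]
      refine combo_conj _ _ ?_ (insert_combo x t ht)
      intro u hu
      rw [mul_one, gam_mul, hu, ← gam_mul]
      exact hyxt

theorem sort_combo : ∀ l : List X,
    Combo (liftOrd ltC) (commSet k X) (fun u => gam u = gam (FreeMonoid.ofList l))
      (mono k (FreeMonoid.ofList l) - mono k (dword (gam (FreeMonoid.ofList l))))
  | [] => by
    rw [show dword (gam (FreeMonoid.ofList ([] : List X))) = FreeMonoid.ofList [] by
      simp [dword, gam], sub_self]
    exact combo_zero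
  | x :: t => by
    have hLs : (Multiset.sort (↑t : Multiset X) (· ≤ ·)).Pairwise (· ≤ ·) :=
      Multiset.pairwise_sort _ _
    have hLperm : (↑(Multiset.sort (↑t : Multiset X) (· ≤ ·)) : Multiset X) = ↑t :=
      Multiset.sort_eq _ _
    set L := Multiset.sort (↑t : Multiset X) (· ≤ ·) with hLdef
    have hdt : dword (gam (FreeMonoid.ofList t)) = FreeMonoid.ofList L := by
      simp [dword, gam, hLdef]
    have hcoe : (↑(List.orderedInsert (· ≤ ·) x L) : Multiset X) = ↑(x :: t) := by
      rw [Multiset.coe_eq_coe.mpr (List.perm_orderedInsert _ _ _)]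
      rw [← Multiset.cons_coe, ← Multiset.cons_coe, hLperm]
    have hkey : dword (gam (FreeMonoid.ofList (x :: t)))
        = FreeMonoid.ofList (List.orderedInsert (· ≤ ·) x L) := by
      have h1 : Multiset.sort (↑(x :: t) : Multiset X) (· ≤ ·)
          = List.orderedInsert (· ≤ ·) x L := by
        haveI : IsAntisymm X (· ≤ ·) := ⟨fun _ _ => le_antisymm⟩
        exact List.Perm.eq_of_pairwise'
          (Multiset.pairwise_sort _ _) (List.Pairwise.orderedInsert x L hLs)
          (Multiset.coe_eq_coe.mp (by rw [Multiset.sort_eq, hcoe]))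
      simp [dword, gam, h1]
    have hgam2 : gam (FreeMonoid.ofList (x :: L)) = gam (FreeMonoid.ofList (x :: t)) := by
      rw [gam_eq_iff]
      simp only [FreeMonoid.toList_ofList]
      rw [← Multiset.cons_coe, ← Multiset.cons_coe, hLperm]
    rw [hkey, ← sub_add_sub_cancel _ (mono k (FreeMonoid.ofList (x :: L))) _]
    refine combo_add ?_ (combo_mono (fun u hu => hu.trans hgam2) (insert_combo ltC x L hLs))
    have he : mono k (FreeMonoid.ofList (x :: t)) - mono k (FreeMonoid.ofList (x :: L))
        = mono k (FreeMonoid.of x) * (mono k (FreeMonoid.ofList t)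
          - mono k (dword (gam (FreeMonoid.ofList t)))) * mono k 1 := by
      rw [hdt]
      simp only [mono, map_one, mul_one, mul_sub, ← map_mul]
      rfl
    rw [he]
    refine combo_conj _ _ ?_ (sort_combo t)
    intro u hu
    rw [mul_one, gam_mul, hu, ← gam_mul]
    rfl

theorem sort_combo' (u : FreeMonoid X) :
    Combo (liftOrd ltC) (commSet k X) (fun v => gam v = gam u)
      (mono k u - mono k (dword (gam u))) :=
  sort_combo ltC u.toList

end SortPart2

/-- for sorted words `a, b ∈ X*` and `s ∈ k[X]`, if
`w = a·δ(s̄)·b = δ(γ(ab)·s̄)` then `a·δ(s)·b ≡ δ(γ(ab)·s)` modulo `(S₁, w)`, where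
`S₁ = {xᵢxⱼ - xⱼxᵢ : i > j}`. -/
theorem stmt_13 {k X : Type*} [Field k] [LinearOrder X]
    (hwf : WellFounded ((· < ·) : X → X → Prop))
    (ltC : Multiplicative (Multiset X) → Multiplicative (Multiset X) → Prop)
    (hC : MonOrd ltC)
    (a b : FreeMonoid X) (ha : a = dword (gam a)) (hb : b = dword (gam b))
    (s : MonoidAlgebra k (Multiplicative (Multiset X)))
    (ms : Multiplicative (Multiset X)) (hms : IsLeadR ltC s ms)
    (w : FreeMonoid X)
    (hw : w = a * dword ms * b) (hw' : w = dword (gam a * gam b * ms)) :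
    TrivModR (liftOrd ltC) (commSet k X) w
      (mono k a * deltaMap s * mono k b - deltaMap (mono k (gam a * gam b) * s)) := by
  classical
  set G := gam a * gam b with hG
  have key1 : mono k a * deltaMap s * mono k b
      = ∑ m ∈ s.coeff.support, MonoidAlgebra.single (a * dword m * b) (s.coeff m) := by
    have hdm : deltaMap s = ∑ m ∈ s.coeff.support, MonoidAlgebra.single (dword m) (s.coeff m) := by
      apply MonoidAlgebra.coeff_injective
      simp [deltaMap, MonoidAlgebra.mapDomain, Finsupp.mapDomain, Finsupp.sum]
    rw [hdm, Finset.mul_sum, Finset.sum_mul]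
    refine Finset.sum_congr rfl fun m _ => ?_
    simp [mono, MonoidAlgebra.of_apply, MonoidAlgebra.single_mul_single]
  have key2 : deltaMap (mono k G * s)
      = ∑ m ∈ s.coeff.support, MonoidAlgebra.single (dword (G * m)) (s.coeff m) := by
    have h1 : mono k G * s = ∑ m ∈ s.coeff.support, MonoidAlgebra.single (G * m) (s.coeff m) := by
      rw [mono, MonoidAlgebra.of_apply, MonoidAlgebra.mul_def, MonoidAlgebra.coeff_single]
      rw [Finsupp.sum_single_index (by simp)]
      simp [Finsupp.sum]
    rw [h1, deltaMap]
    apply MonoidAlgebra.coeff_injective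
    simp [MonoidAlgebra.mapDomain, Finsupp.mapDomain_finset_sum]
  rw [key1, key2, ← Finset.sum_sub_distrib]
  show Combo (liftOrd ltC) (commSet k X) (fun u => liftOrd ltC u w) _
  refine combo_sum fun m hm => ?_
  by_cases hmms : m = ms
  · subst hmms
    rw [show a * dword m * b = w from hw.symm, show dword (G * m) = w from hw'.symm, sub_self]
    exact combo_zero
  · have hlt : ltC m ms := hms.2 m hm hmms
    have hGm : ltC (G * m) (G * ms) := by
      have := hC.2.2 m ms G 1 hlt
      simpa using this
    have hgw : gam w = G * ms := by
      rw [hw, gam_mul, gam_mul, gam_dword, hG]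
      exact mul_right_comm _ _ _
    have hgu : gam (a * dword m * b) = G * m := by
      rw [gam_mul, gam_mul, gam_dword, hG]
      exact mul_right_comm _ _ _
    have hterm : MonoidAlgebra.single (a * dword m * b) (s.coeff m)
        - MonoidAlgebra.single (dword (G * m)) (s.coeff m)
        = s.coeff m • (mono k (a * dword m * b) - mono k (dword (G * m))) := by
      simp [mono, MonoidAlgebra.of_apply, smul_sub, MonoidAlgebra.smul_single']
    rw [hterm]
    refine combo_smul _ (combo_mono ?_ (hgu ▸ sort_combo' ltC (a * dword m * b)))
    intro v hv
    left
    rw [hv, hgw]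
    exact hGm
end
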